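/- arXiv:2106.00701 — 5 statements merged into one kernel-verified Lean document; each statement's English description precedes it below -/
import Mathlib

section
/- Let Γ₁ and Γ₂ be digraphs of orders n₁ ≥ 1 and n₂ ≥ 1 with Laplacians L₁ and L₂, let L = fromBlocks (L₁ + n₂·I) (−J_{n₁×n₂}) 0 L₂ be the Laplacian of the directed join Γ₁ →∨ Γ₂, and let Q be a restrictor matrix of order n = n₁ + n₂. Then Γ₁ →∨ Γ₂ is restricted-normal (that is, QᴴLQ is a normal matrix and L is not a normal matrix) if and only if L₁ and L₂ are both normal matrices. -/
open Matrix

/-- A 0/1 adjacency matrix with zero diagonal. -/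
def IsAdj {m : Type*} [Fintype m] (A : Matrix m m ℝ) : Prop :=
  (∀ i j, A i j = 0 ∨ A i j = 1) ∧ ∀ i, A i i = 0

/-- Laplacian of a digraph: `L i i = d⁺(i)` and `L i j = -A i j` for `i ≠ j`. -/
noncomputable def lap {m : Type*} [Fintype m] [DecidableEq m] (A : Matrix m m ℝ) :
    Matrix m m ℝ :=
  Matrix.diagonal (fun i => ∑ j, A i j) - A

/-- Complexified Laplacian. -/
noncomputable def lapC {m : Type*} [Fintype m] [DecidableEq m] (A : Matrix m m ℝ) :
    Matrix m m ℂ :=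
  (lap A).map (fun x => (x : ℂ))

/-- Restricted numerical range `W_r(M) = { xᴴ M x : ‖x‖ = 1, xᴴ e = 0 }`. -/
noncomputable def rnr {m : Type*} [Fintype m] (M : Matrix m m ℂ) : Set ℂ :=
  { z | ∃ x : EuclideanSpace ℂ m, ‖x‖ = 1 ∧ star (x : m → ℂ) ⬝ᵥ (fun _ => (1 : ℂ)) = 0 ∧
      z = star (x : m → ℂ) ⬝ᵥ M.mulVec (x : m → ℂ) }

/-- Restrictor matrix: orthonormal columns, all orthogonal to the all-ones vector. -/
def IsRestrictor {m k : Type*} [Fintype m] [Fintype k] [DecidableEq k]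
    (Q : Matrix m k ℂ) : Prop :=
  Qᴴ * Q = 1 ∧ Qᴴ *ᵥ (fun _ => (1 : ℂ)) = 0

/-- Normal matrix: `Mᴴ M = M Mᴴ` (for real matrices, `Mᵀ M = M Mᵀ`). -/
def IsNormalM {m R : Type*} [Fintype m] [Mul (Matrix m m R)] [Star (Matrix m m R)]
    (M : Matrix m m R) : Prop := star M * M = M * star M

/-- Balanced digraph: `d⁺(i) = d⁻(i)` for every vertex. -/
def Bal {m : Type*} [Fintype m] (A : Matrix m m ℝ) : Prop :=
  ∀ i, ∑ j, A i j = ∑ j, A j i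

set_option linter.unusedSectionVars false
set_option linter.unusedVariables false

namespace RN

/-- all-ones matrix -/
def ones (α β : Type*) : Matrix α β ℝ := of fun _ _ => (1:ℝ)

variable {α β γ : Type*} [Fintype α] [Fintype β] [Fintype γ]

@[simp] lemma ones_apply (i : α) (j : β) : ones α β i j = 1 := rfl

@[simp] lemma transpose_ones : (ones α β)ᵀ = ones β α := rfl

lemma ones_mul_ones : ones α β * ones β γ = (Fintype.card β : ℝ) • ones α γ := by
  ext i j
  simp only [mul_apply, ones_apply, mul_one, Finset.sum_const, Finset.card_univ,
    nsmul_eq_mul, Matrix.smul_apply, smul_eq_mul]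

lemma mul_ones_eq_zero {M : Matrix α β ℝ} (h : M *ᵥ (fun _ => (1:ℝ)) = 0) :
    M * ones β γ = 0 := by
  ext i j
  simpa [mul_apply, mulVec, dotProduct, ones] using congrFun h i

lemma ones_mul_eq_zero {M : Matrix β γ ℝ} (h : Mᵀ *ᵥ (fun _ => (1:ℝ)) = 0) :
    ones α β * M = 0 := by
  ext i j
  have := congrFun h j
  simp only [mulVec, dotProduct, transpose_apply, mul_one, Pi.zero_apply] at this
  simp [mul_apply, ones, this]

variable {m : Type*} [Fintype m] [DecidableEq m]

lemma lap_mulVec_ones (A : Matrix m m ℝ) : lap A *ᵥ (fun _ => (1:ℝ)) = 0 := by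
  funext i
  simp [lap, mulVec, dotProduct, Matrix.sub_apply, diagonal_apply, Finset.sum_sub_distrib,
    Finset.sum_ite_eq']

/-- a normal Laplacian of an adjacency matrix is balanced -/
lemma lap_balanced {A : Matrix m m ℝ} (hA : IsAdj A) (h : IsNormalM (lap A)) :
    (lap A)ᵀ *ᵥ (fun _ => (1:ℝ)) = 0 := by
  have hstar : star (lap A) = (lap A)ᵀ := by
    rw [Matrix.star_eq_conjTranspose]
    ext i j
    simp [conjTranspose_apply]
  unfold IsNormalM at h
  rw [hstar] at h
  have key : ∀ i, ∑ j, A j i = ∑ j, A i j := by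
    intro i
    have h' := congrFun (congrFun h i) i
    simp only [mul_apply, transpose_apply] at h'
    have e1 : ∀ j, lap A j i * lap A j i =
        (if j = i then (∑ k, A i k)^2 - A j i else 0) + A j i := by
      intro j
      by_cases hj : j = i
      · rw [hj]
        simp only [lap, Matrix.sub_apply, diagonal_apply, eq_self_iff_true, if_true, hA.2 i]
        ring
      · simp only [lap, Matrix.sub_apply, diagonal_apply, if_neg hj]
        rcases hA.1 j i with h0 | h0 <;> rw [h0] <;> ring
    have e2 : ∀ j, lap A i j * lap A i j =
        (if j = i then (∑ k, A i k)^2 - A i j else 0) + A i j := by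
      intro j
      by_cases hj : j = i
      · rw [hj]
        simp only [lap, Matrix.sub_apply, diagonal_apply, eq_self_iff_true, if_true, hA.2 i]
        ring
      · have hj' : ¬ (i = j) := fun hh => hj hh.symm
        simp only [lap, Matrix.sub_apply, diagonal_apply, if_neg hj, if_neg hj']
        rcases hA.1 i j with h0 | h0 <;> rw [h0] <;> ring
    rw [Finset.sum_congr rfl (fun j _ => e1 j), Finset.sum_congr rfl (fun j _ => e2 j)] at h'
    simp only [Finset.sum_add_distrib, Finset.sum_ite_eq' Finset.univ i] at h'
    simp only [Finset.mem_univ, if_true, hA.2 i] at h'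
    linarith
  funext i
  simp only [mulVec, dotProduct, transpose_apply, mul_one, Pi.zero_apply]
  have : ∑ j, lap A j i = ∑ j, A i j - ∑ j, A j i := by
    simp [lap, Matrix.sub_apply, diagonal_apply, Finset.sum_sub_distrib, Finset.sum_ite_eq']
  rw [this, key i, sub_self]



def onesC (α β : Type*) : Matrix α β ℂ := of fun _ _ => (1:ℂ)

variable {m k : Type*} [Fintype m] [Fintype k] [DecidableEq k] [DecidableEq m]

@[simp] lemma onesC_apply {α β : Type*} (i : α) (j : β) : onesC α β i j = 1 := rfl

lemma onesC_mul_onesC {α β γ : Type*} [Fintype α] [Fintype β] [Fintype γ] :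
    onesC α β * onesC β γ = (Fintype.card β : ℂ) • onesC α γ := by
  ext i j
  simp only [mul_apply, onesC_apply, mul_one, Finset.sum_const, Finset.card_univ,
    nsmul_eq_mul, Matrix.smul_apply, smul_eq_mul]

lemma eq_zero_of_trace_conj_self {D : Matrix m m ℂ} (h : Matrix.trace (Dᴴ * D) = 0) :
    D = 0 := by
  have htr : Matrix.trace (Dᴴ * D) = ∑ j, ∑ i, (Complex.normSq (D i j) : ℂ) := by
    simp only [Matrix.trace, Matrix.diag, mul_apply, conjTranspose_apply,
      Complex.normSq_eq_conj_mul_self, Complex.star_def]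
  rw [htr] at h
  have hre : ∑ j, ∑ i, Complex.normSq (D i j) = 0 := by
    have := congrArg Complex.re h
    simpa using this
  ext i j
  have hnn : ∀ j' ∈ Finset.univ, (0:ℝ) ≤ ∑ i, Complex.normSq (D i j') := fun j' _ =>
    Finset.sum_nonneg fun i _ => Complex.normSq_nonneg _
  have h1 := (Finset.sum_eq_zero_iff_of_nonneg hnn).1 hre j (Finset.mem_univ j)
  have h2 := (Finset.sum_eq_zero_iff_of_nonneg
    (fun i _ => Complex.normSq_nonneg (D i j))).1 h1 i (Finset.mem_univ i)
  simpa using Complex.normSq_eq_zero.1 h2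

lemma conjT_mul_onesC {Q : Matrix m k ℂ} (hQ2 : Qᴴ *ᵥ (fun _ => (1:ℂ)) = 0) {γ : Type*} :
    Qᴴ * onesC m γ = 0 := by
  ext i j
  simpa [mul_apply, mulVec, dotProduct, onesC] using congrFun hQ2 i

lemma onesC_mul_Q {Q : Matrix m k ℂ} (hQ2 : Qᴴ *ᵥ (fun _ => (1:ℂ)) = 0) {γ : Type*} :
    onesC γ m * Q = 0 := by
  ext i j
  have h := congrFun hQ2 j
  simp only [mulVec, dotProduct, conjTranspose_apply, mul_one, Pi.zero_apply] at h
  have : ∑ l, Q l j = star (∑ l, star (Q l j)) := by simp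
  simp only [mul_apply, onesC_apply, one_mul, Matrix.zero_apply, this, h, star_zero]

lemma restrictor_proj {Q : Matrix m k ℂ} (hQ1 : Qᴴ * Q = 1)
    (hQ2 : Qᴴ *ᵥ (fun _ => (1:ℂ)) = 0)
    (hcard : Fintype.card k + 1 = Fintype.card m) :
    Q * Qᴴ = 1 - ((Fintype.card m : ℂ))⁻¹ • onesC m m := by
  set s : ℂ := ((Fintype.card m : ℂ))⁻¹ with hs
  have hn : (Fintype.card m : ℂ) ≠ 0 := by
    have : 0 < Fintype.card m := by omega
    exact Nat.cast_ne_zero.2 this.ne'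
  set D : Matrix m m ℂ := 1 - Q * Qᴴ - s • onesC m m with hD
  have hPP : (Q * Qᴴ) * (Q * Qᴴ) = Q * Qᴴ := by
    rw [Matrix.mul_assoc, ← Matrix.mul_assoc Qᴴ, hQ1, Matrix.one_mul]
  have hPE : (Q * Qᴴ) * onesC m m = 0 := by
    rw [Matrix.mul_assoc, conjT_mul_onesC hQ2, Matrix.mul_zero]
  have hEP : onesC m m * (Q * Qᴴ) = 0 := by
    rw [← Matrix.mul_assoc, onesC_mul_Q hQ2, Matrix.zero_mul]
  have hEh : (onesC m m)ᴴ = onesC m m := by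
    ext i j; simp [conjTranspose_apply]
  have hDh : Dᴴ = D := by
    rw [hD]
    simp only [conjTranspose_sub, conjTranspose_one, conjTranspose_smul, hEh,
      conjTranspose_mul, conjTranspose_conjTranspose]
    congr 1
    simp [hs]
  have hDD : D * D = D := by
    rw [hD]
    simp only [Matrix.sub_mul, Matrix.mul_sub, Matrix.one_mul, Matrix.mul_one,
      Matrix.smul_mul, Matrix.mul_smul, hPP, hPE, hEP, onesC_mul_onesC, smul_zero,
      sub_zero, smul_smul]
    have hsc : s * (Fintype.card m : ℂ) = 1 := inv_mul_cancel₀ hn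
    simp only [hsc, one_smul, sub_self, smul_zero, sub_zero]
  have htrD : Matrix.trace D = 0 := by
    rw [hD]
    have h1 : Matrix.trace (Q * Qᴴ) = (Fintype.card k : ℂ) := by
      rw [Matrix.trace_mul_comm, hQ1, Matrix.trace_one]
    have h2 : Matrix.trace (onesC m m) = (Fintype.card m : ℂ) := by
      simp [Matrix.trace, Matrix.diag, onesC]
    simp only [Matrix.trace_sub, Matrix.trace_one, Matrix.trace_smul, h1, h2, smul_eq_mul]
    have hck : (Fintype.card k : ℂ) + 1 = (Fintype.card m : ℂ) := by exact_mod_cast hcard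
    rw [hs, inv_mul_cancel₀ hn]
    linear_combination - hck
  have hD0 : D = 0 := by
    apply eq_zero_of_trace_conj_self
    rw [hDh, hDD, htrD]
  have h2 : (1 - s • onesC m m) - Q * Qᴴ = 0 := by
    rw [← hD0, hD]; abel
  exact (sub_eq_zero.mp h2).symm

section Core

variable {n₁ n₂ : ℕ} {L₁ : Matrix (Fin n₁) (Fin n₁) ℝ} {L₂ : Matrix (Fin n₂) (Fin n₂) ℝ}

/-- helper: J * (M * N) = 0 when column sums of M vanish -/
lemma ones_mul_mul {α' β γ δ : Type*} [Fintype α'] [Fintype β] [Fintype γ] {M : Matrix β γ ℝ}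
    (h : Mᵀ *ᵥ (fun _ => (1:ℝ)) = 0) (N : Matrix γ δ ℝ) :
    ones α' β * (M * N) = 0 := by
  rw [← Matrix.mul_assoc, ones_mul_eq_zero h, Matrix.zero_mul]

lemma core_identity
    (M : Matrix (Fin n₁ ⊕ Fin n₂) (Fin n₁ ⊕ Fin n₂) ℝ)
    (hM : M = fromBlocks (L₁ + (n₂:ℝ) • 1) (-(ones (Fin n₁) (Fin n₂))) 0 L₂)
    (h1 : L₁ *ᵥ (fun _ => (1:ℝ)) = 0) (h1' : L₁ᵀ *ᵥ (fun _ => (1:ℝ)) = 0)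
    (h2 : L₂ *ᵥ (fun _ => (1:ℝ)) = 0) (h2' : L₂ᵀ *ᵥ (fun _ => (1:ℝ)) = 0) :
    (((n₁+n₂:ℕ):ℝ) • 1 - ones _ _) *
      ((((n₁+n₂:ℕ):ℝ)) • (Mᵀ*M - M*Mᵀ) - Mᵀ * ones _ _ * M) *
      (((n₁+n₂:ℕ):ℝ) • 1 - ones _ _)
    = fromBlocks ((((n₁+n₂:ℕ):ℝ))^3 • (L₁ᵀ*L₁ - L₁*L₁ᵀ)) 0 0
        ((((n₁+n₂:ℕ):ℝ))^3 • (L₂ᵀ*L₂ - L₂*L₂ᵀ)) := by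
  have h1'' : (L₁ᵀ)ᵀ *ᵥ (fun _ => (1:ℝ)) = 0 := by rwa [transpose_transpose]
  have h2'' : (L₂ᵀ)ᵀ *ᵥ (fun _ => (1:ℝ)) = 0 := by rwa [transpose_transpose]
  have hMt : Mᵀ = fromBlocks (L₁ᵀ + (n₂:ℝ) • 1) 0 (-(ones (Fin n₂) (Fin n₁))) L₂ᵀ := by
    rw [hM, fromBlocks_transpose]
    simp [transpose_add, transpose_smul, transpose_one]
  have hE : ones (Fin n₁ ⊕ Fin n₂) (Fin n₁ ⊕ Fin n₂) =
      fromBlocks (ones _ _) (ones _ _) (ones _ _) (ones _ _) := by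
    ext (i|i) (j|j) <;> rfl
  have hLtL : Mᵀ * M = fromBlocks
      (L₁ᵀ*L₁ + (n₂:ℝ)•L₁ᵀ + (n₂:ℝ)•L₁ + ((n₂:ℝ)*(n₂:ℝ))•1)
      (-((n₂:ℝ) • ones (Fin n₁) (Fin n₂)))
      (-((n₂:ℝ) • ones (Fin n₂) (Fin n₁)))
      ((n₁:ℝ) • ones (Fin n₂) (Fin n₂) + L₂ᵀ*L₂) := by
    rw [hMt, hM, fromBlocks_multiply]
    refine fromBlocks_inj.mpr ⟨?_, ?_, ?_, ?_⟩ <;>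
      · simp only [Matrix.mul_add, Matrix.add_mul, Matrix.mul_sub, Matrix.sub_mul, Matrix.neg_mul, Matrix.mul_neg,
          Matrix.smul_mul, Matrix.mul_smul, Matrix.one_mul, Matrix.mul_one,
          Matrix.zero_mul, Matrix.mul_zero, Matrix.mul_assoc, smul_smul, smul_zero, neg_zero,
          add_zero, zero_add, sub_zero, neg_neg, smul_neg,
          mul_ones_eq_zero h1, mul_ones_eq_zero h1', mul_ones_eq_zero h2,
          mul_ones_eq_zero h2', ones_mul_eq_zero h1', ones_mul_eq_zero h1'',
          ones_mul_eq_zero h2', ones_mul_eq_zero h2'', ones_mul_mul h1',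
          ones_mul_mul h1'', ones_mul_mul h2', ones_mul_mul h2'',
          ones_mul_ones, Fintype.card_fin]
        try module
  have hLLt : M * Mᵀ = fromBlocks
      (L₁*L₁ᵀ + (n₂:ℝ)•L₁ + (n₂:ℝ)•L₁ᵀ + ((n₂:ℝ)*(n₂:ℝ))•1 + (n₂:ℝ)•ones (Fin n₁) (Fin n₁))
      0 0 (L₂*L₂ᵀ) := by
    rw [hMt, hM, fromBlocks_multiply]
    refine fromBlocks_inj.mpr ⟨?_, ?_, ?_, ?_⟩ <;>
      · simp only [Matrix.mul_add, Matrix.add_mul, Matrix.mul_sub, Matrix.sub_mul, Matrix.neg_mul, Matrix.mul_neg,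
          Matrix.smul_mul, Matrix.mul_smul, Matrix.one_mul, Matrix.mul_one,
          Matrix.zero_mul, Matrix.mul_zero, Matrix.mul_assoc, smul_smul, smul_zero, neg_zero,
          add_zero, zero_add, sub_zero, neg_neg, smul_neg,
          mul_ones_eq_zero h1, mul_ones_eq_zero h1', mul_ones_eq_zero h2,
          mul_ones_eq_zero h2', ones_mul_eq_zero h1', ones_mul_eq_zero h1'',
          ones_mul_eq_zero h2', ones_mul_eq_zero h2'', ones_mul_mul h1',
          ones_mul_mul h1'', ones_mul_mul h2', ones_mul_mul h2'',
          ones_mul_ones, Fintype.card_fin]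
        try module
  have hLtE : Mᵀ * ones (Fin n₁ ⊕ Fin n₂) (Fin n₁ ⊕ Fin n₂) = fromBlocks
      ((n₂:ℝ) • ones (Fin n₁) (Fin n₁)) ((n₂:ℝ) • ones (Fin n₁) (Fin n₂))
      (-((n₁:ℝ) • ones (Fin n₂) (Fin n₁))) (-((n₁:ℝ) • ones (Fin n₂) (Fin n₂))) := by
    rw [hMt, hE, fromBlocks_multiply]
    refine fromBlocks_inj.mpr ⟨?_, ?_, ?_, ?_⟩ <;>
      · simp only [Matrix.mul_add, Matrix.add_mul, Matrix.mul_sub, Matrix.sub_mul, Matrix.neg_mul, Matrix.mul_neg,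
          Matrix.smul_mul, Matrix.mul_smul, Matrix.one_mul, Matrix.mul_one,
          Matrix.zero_mul, Matrix.mul_zero, Matrix.mul_assoc, smul_smul, smul_zero, neg_zero,
          add_zero, zero_add, sub_zero, neg_neg, smul_neg, smul_sub, smul_add,
          mul_ones_eq_zero h1, mul_ones_eq_zero h1', mul_ones_eq_zero h2,
          mul_ones_eq_zero h2', ones_mul_eq_zero h1', ones_mul_eq_zero h1'',
          ones_mul_eq_zero h2', ones_mul_eq_zero h2'', ones_mul_mul h1',
          ones_mul_mul h1'', ones_mul_mul h2', ones_mul_mul h2'',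
          ones_mul_ones, Fintype.card_fin]
        try push_cast
        try module
  have hLtEL : Mᵀ * ones (Fin n₁ ⊕ Fin n₂) (Fin n₁ ⊕ Fin n₂) * M = fromBlocks
      (((n₂:ℝ)*n₂) • ones (Fin n₁) (Fin n₁)) (-(((n₁:ℝ)*n₂) • ones (Fin n₁) (Fin n₂)))
      (-(((n₁:ℝ)*n₂) • ones (Fin n₂) (Fin n₁))) (((n₁:ℝ)*n₁) • ones (Fin n₂) (Fin n₂)) := by
    rw [hLtE, hM, fromBlocks_multiply]
    refine fromBlocks_inj.mpr ⟨?_, ?_, ?_, ?_⟩ <;>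
      · simp only [Matrix.mul_add, Matrix.add_mul, Matrix.mul_sub, Matrix.sub_mul, Matrix.neg_mul, Matrix.mul_neg,
          Matrix.smul_mul, Matrix.mul_smul, Matrix.one_mul, Matrix.mul_one,
          Matrix.zero_mul, Matrix.mul_zero, Matrix.mul_assoc, smul_smul, smul_zero, neg_zero,
          add_zero, zero_add, sub_zero, neg_neg, smul_neg, smul_sub, smul_add,
          mul_ones_eq_zero h1, mul_ones_eq_zero h1', mul_ones_eq_zero h2,
          mul_ones_eq_zero h2', ones_mul_eq_zero h1', ones_mul_eq_zero h1'',
          ones_mul_eq_zero h2', ones_mul_eq_zero h2'', ones_mul_mul h1',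
          ones_mul_mul h1'', ones_mul_mul h2', ones_mul_mul h2'',
          ones_mul_ones, Fintype.card_fin]
        try push_cast
        try module
  have hC : ((n₁+n₂:ℕ):ℝ) • (Mᵀ*M - M*Mᵀ) - Mᵀ * ones (Fin n₁ ⊕ Fin n₂) (Fin n₁ ⊕ Fin n₂) * M
      = fromBlocks
      (((n₁+n₂:ℕ):ℝ) • (L₁ᵀ*L₁) - ((n₁+n₂:ℕ):ℝ) • (L₁*L₁ᵀ)
        - (((n₁+n₂:ℕ):ℝ)*(n₂:ℝ) + (n₂:ℝ)*n₂) • ones (Fin n₁) (Fin n₁))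
      (-(((n₂:ℝ)*n₂) • ones (Fin n₁) (Fin n₂)))
      (-(((n₂:ℝ)*n₂) • ones (Fin n₂) (Fin n₁)))
      (((n₁+n₂:ℕ):ℝ) • (L₂ᵀ*L₂) - ((n₁+n₂:ℕ):ℝ) • (L₂*L₂ᵀ)
        + ((n₁:ℝ)*n₂) • ones (Fin n₂) (Fin n₂)) := by
    rw [hLtL, hLLt, hLtEL]
    ext (i|i) (j|j) <;>
      · simp only [Matrix.sub_apply, Matrix.smul_apply, Matrix.add_apply, Matrix.neg_apply, fromBlocks_apply₁₁,
          fromBlocks_apply₁₂, fromBlocks_apply₂₁, fromBlocks_apply₂₂, smul_eq_mul,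
          Matrix.zero_apply]
        try push_cast
        try ring
  have hP : (((n₁+n₂:ℕ):ℝ) • 1 - ones (Fin n₁ ⊕ Fin n₂) (Fin n₁ ⊕ Fin n₂)) = fromBlocks
      (((n₁+n₂:ℕ):ℝ) • 1 - ones (Fin n₁) (Fin n₁)) (-(ones (Fin n₁) (Fin n₂)))
      (-(ones (Fin n₂) (Fin n₁))) (((n₁+n₂:ℕ):ℝ) • 1 - ones (Fin n₂) (Fin n₂)) := by
    rw [hE, ← fromBlocks_one, fromBlocks_smul]
    ext (i|i) (j|j) <;>
      · simp only [Matrix.sub_apply, Matrix.smul_apply, Matrix.add_apply, Matrix.neg_apply, fromBlocks_apply₁₁,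
          fromBlocks_apply₁₂, fromBlocks_apply₂₁, fromBlocks_apply₂₂, smul_eq_mul,
          Matrix.zero_apply, ones_apply]
        try ring
  rw [hC, hP, fromBlocks_multiply, fromBlocks_multiply]
  refine fromBlocks_inj.mpr ⟨?_, ?_, ?_, ?_⟩ <;>
    · simp only [Matrix.mul_add, Matrix.add_mul, Matrix.mul_sub, Matrix.sub_mul, Matrix.neg_mul, Matrix.mul_neg,
          Matrix.smul_mul, Matrix.mul_smul, Matrix.one_mul, Matrix.mul_one,
          Matrix.zero_mul, Matrix.mul_zero, Matrix.mul_assoc, smul_smul, smul_zero, neg_zero,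
          add_zero, zero_add, sub_zero, neg_neg, smul_neg, smul_sub, smul_add,
          mul_ones_eq_zero h1, mul_ones_eq_zero h1', mul_ones_eq_zero h2,
          mul_ones_eq_zero h2', ones_mul_eq_zero h1', ones_mul_eq_zero h1'',
          ones_mul_eq_zero h2', ones_mul_eq_zero h2'', ones_mul_mul h1',
          ones_mul_mul h1'', ones_mul_mul h2', ones_mul_mul h2'',
          ones_mul_ones, Fintype.card_fin]
      try push_cast
      try module

lemma balanced_of_core_zero (hn1 : 1 ≤ n₁) (hn2 : 1 ≤ n₂)
    (M : Matrix (Fin n₁ ⊕ Fin n₂) (Fin n₁ ⊕ Fin n₂) ℝ)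
    (hM : M = fromBlocks (L₁ + (n₂:ℝ) • 1) (-(ones (Fin n₁) (Fin n₂))) 0 L₂)
    (h1 : L₁ *ᵥ (fun _ => (1:ℝ)) = 0) (h2 : L₂ *ᵥ (fun _ => (1:ℝ)) = 0)
    (hN : (((n₁+n₂:ℕ):ℝ) • 1 - ones _ _) *
      ((((n₁+n₂:ℕ):ℝ)) • (Mᵀ*M - M*Mᵀ) - Mᵀ * ones _ _ * M) *
      (((n₁+n₂:ℕ):ℝ) • 1 - ones _ _) = 0) :
    L₁ᵀ *ᵥ (fun _ => (1:ℝ)) = 0 ∧ L₂ᵀ *ᵥ (fun _ => (1:ℝ)) = 0 := by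
  have hrow1 : ∀ i, ∑ j, L₁ i j = 0 := fun i => by
    simpa [mulVec, dotProduct] using congrFun h1 i
  have hrow2 : ∀ i, ∑ j, L₂ i j = 0 := fun i => by
    simpa [mulVec, dotProduct] using congrFun h2 i
  set c₁ : Fin n₁ → ℝ := fun i => ∑ j, L₁ j i with hc₁
  set c₂ : Fin n₂ → ℝ := fun i => ∑ j, L₂ j i with hc₂
  have hs1 : ∑ i, c₁ i = 0 := by
    rw [hc₁]; rw [Finset.sum_comm]
    exact Finset.sum_eq_zero (fun j _ => hrow1 j)
  have hs2 : ∑ i, c₂ i = 0 := by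
    rw [hc₂]; rw [Finset.sum_comm]
    exact Finset.sum_eq_zero (fun j _ => hrow2 j)
  set nn : ℝ := ((n₁+n₂:ℕ):ℝ) with hnn
  have hnpos : (0:ℝ) < nn := by
    have h' : 0 < n₁ + n₂ := by omega
    rw [hnn]; exact_mod_cast h'
  set z : Fin n₁ ⊕ Fin n₂ → ℝ := Sum.elim (fun _ => (n₂:ℝ)) (fun _ => -(n₁:ℝ)) with hz
  -- M *ᵥ z
  have hMz : M *ᵥ z = Sum.elim (fun _ => nn * n₂) (fun _ => (0:ℝ)) := by
    funext x
    cases x with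
    | inl i =>
      simp only [mulVec, dotProduct, Fintype.sum_sum_type, hM, hz,
        fromBlocks_apply₁₁, fromBlocks_apply₁₂, Sum.elim_inl, Sum.elim_inr,
        Matrix.add_apply, Matrix.smul_apply, one_apply, smul_eq_mul, Matrix.neg_apply, ones_apply]
      rw [Finset.sum_congr rfl (fun j (_ : j ∈ Finset.univ) => show
        (L₁ i j + (n₂:ℝ) * (if i = j then 1 else 0)) * (n₂:ℝ)
          = L₁ i j * n₂ + (if i = j then (n₂:ℝ)*n₂ else 0) by
        by_cases h : i = j <;> simp [h] <;> ring)]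
      rw [Finset.sum_add_distrib, ← Finset.sum_mul, hrow1 i, Finset.sum_ite_eq]
      simp only [Finset.mem_univ, if_true, Finset.sum_const, Finset.card_univ,
        Fintype.card_fin, nsmul_eq_mul, Sum.elim_inl, hnn]
      push_cast
      ring
    | inr i =>
      simp only [mulVec, dotProduct, Fintype.sum_sum_type, hM, hz,
        fromBlocks_apply₂₁, fromBlocks_apply₂₂, Sum.elim_inl, Sum.elim_inr,
        Matrix.zero_apply, zero_mul, Finset.sum_const_zero, zero_add]
      rw [← Finset.sum_mul, hrow2 i, zero_mul]
  -- Mᵀ *ᵥ z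
  have hMtz : Mᵀ *ᵥ z = Sum.elim (fun i => (n₂:ℝ) * c₁ i + (n₂:ℝ)*(n₂:ℝ))
      (fun i => -((n₁:ℝ) * c₂ i) - (n₁:ℝ)*(n₂:ℝ)) := by
    funext x
    cases x with
    | inl i =>
      simp only [mulVec, dotProduct, Fintype.sum_sum_type, transpose_apply, hM, hz,
        fromBlocks_apply₁₁, fromBlocks_apply₂₁, Sum.elim_inl, Sum.elim_inr,
        Matrix.add_apply, Matrix.smul_apply, one_apply, smul_eq_mul, Matrix.zero_apply,
        zero_mul, Finset.sum_const_zero, add_zero]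
      rw [Finset.sum_congr rfl (fun j (_ : j ∈ Finset.univ) => show
        (L₁ j i + (n₂:ℝ) * (if j = i then 1 else 0)) * (n₂:ℝ)
          = L₁ j i * n₂ + (if j = i then (n₂:ℝ)*n₂ else 0) by
        by_cases h : j = i <;> simp [h] <;> ring)]
      rw [Finset.sum_add_distrib, ← Finset.sum_mul, Finset.sum_ite_eq']
      simp only [Finset.mem_univ, if_true, Sum.elim_inl, hc₁]
      ring
    | inr i =>
      simp only [mulVec, dotProduct, Fintype.sum_sum_type, transpose_apply, hM, hz,
        fromBlocks_apply₁₂, fromBlocks_apply₂₂, Sum.elim_inl, Sum.elim_inr,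
        Matrix.neg_apply, ones_apply]
      rw [← Finset.sum_mul, ← Finset.sum_mul]
      simp only [Finset.sum_const, Finset.card_univ, Fintype.card_fin, nsmul_eq_mul,
        Sum.elim_inr, hc₂]
      push_cast
      ring
  -- scalar contraction
  have hEz : ones (Fin n₁ ⊕ Fin n₂) (Fin n₁ ⊕ Fin n₂) *ᵥ z = 0 := by
    funext x
    simp only [mulVec, dotProduct, ones_apply, one_mul, Fintype.sum_sum_type, hz,
      Sum.elim_inl, Sum.elim_inr, Finset.sum_const, Finset.card_univ, Fintype.card_fin,
      nsmul_eq_mul, Pi.zero_apply]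
    ring
  have hPz : (nn • 1 - ones (Fin n₁ ⊕ Fin n₂) (Fin n₁ ⊕ Fin n₂)) *ᵥ z = nn • z := by
    rw [Matrix.sub_mulVec, Matrix.smul_mulVec, Matrix.one_mulVec, hEz, sub_zero]
  have hPt : (nn • 1 - ones (Fin n₁ ⊕ Fin n₂) (Fin n₁ ⊕ Fin n₂))ᵀ
      = nn • 1 - ones (Fin n₁ ⊕ Fin n₂) (Fin n₁ ⊕ Fin n₂) := by
    simp [transpose_sub, transpose_smul, transpose_one]
  have h0 : z ⬝ᵥ (((((n₁+n₂:ℕ):ℝ) • 1 - ones _ _) *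
      ((((n₁+n₂:ℕ):ℝ)) • (Mᵀ*M - M*Mᵀ) - Mᵀ * ones _ _ * M) *
      (((n₁+n₂:ℕ):ℝ) • 1 - ones _ _)) *ᵥ z) = 0 := by
    rw [hN]; simp
  rw [← Matrix.mulVec_mulVec, ← Matrix.mulVec_mulVec, hPz, Matrix.dotProduct_mulVec,
    ← hPt, Matrix.vecMul_transpose, hPz] at h0
  have hCz : z ⬝ᵥ ((nn • (Mᵀ*M - M*Mᵀ) - Mᵀ * ones _ _ * M) *ᵥ z) = 0 := by
    have h0' : nn * (nn * (z ⬝ᵥ ((nn • (Mᵀ*M - M*Mᵀ) - Mᵀ * ones _ _ * M) *ᵥ z))) = 0 := by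
      rw [← h0]
      rw [smul_dotProduct, Matrix.mulVec_smul, dotProduct_smul]
      simp only [hnn, smul_eq_mul]
      try ring
    rcases mul_eq_zero.mp h0' with h | h
    · exact absurd h hnpos.ne'
    rcases mul_eq_zero.mp h with h | h
    · exact absurd h hnpos.ne'
    exact h
  -- compute the three terms
  set x : ℝ := ∑ i, c₁ i * c₁ i with hxd
  set y : ℝ := ∑ i, c₂ i * c₂ i with hyd
  have t1 : z ⬝ᵥ ((Mᵀ*M) *ᵥ z) = (n₁:ℝ) * (nn*n₂)^2 := by
    rw [← Matrix.mulVec_mulVec, Matrix.dotProduct_mulVec, Matrix.vecMul_transpose, hMz,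
      sumElim_dotProduct_sumElim]
    simp only [dotProduct, Finset.sum_const, Finset.card_univ, Fintype.card_fin,
      nsmul_eq_mul, mul_zero, zero_mul, add_zero, Finset.sum_const_zero]
    ring
  have t2 : z ⬝ᵥ ((M*Mᵀ) *ᵥ z) = (n₂:ℝ)^2 * x + (n₁:ℝ)*(n₂:ℝ)^4
      + (n₁:ℝ)^2 * y + (n₁:ℝ)^2*(n₂:ℝ)^3 := by
    have hvm : z ᵥ* M = Mᵀ *ᵥ z := by
      conv_lhs => rw [show M = (Mᵀ)ᵀ by rw [transpose_transpose]]
      rw [Matrix.vecMul_transpose]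
    rw [← Matrix.mulVec_mulVec, Matrix.dotProduct_mulVec, hvm, hMtz,
      sumElim_dotProduct_sumElim]
    simp only [dotProduct]
    rw [Finset.sum_congr rfl (fun i (_ : i ∈ Finset.univ) => show
      ((n₂:ℝ) * c₁ i + (n₂:ℝ)*(n₂:ℝ)) * ((n₂:ℝ) * c₁ i + (n₂:ℝ)*(n₂:ℝ))
        = (n₂:ℝ)^2 * (c₁ i * c₁ i) + 2*(n₂:ℝ)^3 * c₁ i + (n₂:ℝ)^4 by ring)]
    rw [Finset.sum_congr rfl (fun i (_ : i ∈ Finset.univ) => show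
      (-((n₁:ℝ) * c₂ i) - (n₁:ℝ)*(n₂:ℝ)) * (-((n₁:ℝ) * c₂ i) - (n₁:ℝ)*(n₂:ℝ))
        = (n₁:ℝ)^2 * (c₂ i * c₂ i) + 2*(n₁:ℝ)^2*(n₂:ℝ) * c₂ i + (n₁:ℝ)^2*(n₂:ℝ)^2 by ring)]
    simp only [Finset.sum_add_distrib, ← Finset.mul_sum, hs1, hs2, mul_zero,
      Finset.sum_const, Finset.card_univ, Fintype.card_fin, nsmul_eq_mul, ← hxd, ← hyd]
    ring
  have t3 : z ⬝ᵥ ((Mᵀ * ones (Fin n₁ ⊕ Fin n₂) (Fin n₁ ⊕ Fin n₂) * M) *ᵥ z)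
      = ((n₁:ℝ) * (nn*n₂))^2 := by
    rw [Matrix.mul_assoc, ← Matrix.mulVec_mulVec, ← Matrix.mulVec_mulVec,
      Matrix.dotProduct_mulVec, Matrix.vecMul_transpose, hMz]
    have hEa : ones (Fin n₁ ⊕ Fin n₂) (Fin n₁ ⊕ Fin n₂) *ᵥ
        (Sum.elim (fun _ => nn * (n₂:ℝ)) (fun _ => (0:ℝ)))
        = fun _ => (n₁:ℝ) * (nn * n₂) := by
      funext w
      simp only [mulVec, dotProduct, ones_apply, one_mul, Fintype.sum_sum_type,
        Sum.elim_inl, Sum.elim_inr, Finset.sum_const, Finset.card_univ,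
        Fintype.card_fin, nsmul_eq_mul]
      ring
    rw [hEa]
    rw [show (fun (_ : Fin n₁ ⊕ Fin n₂) => (n₁:ℝ) * (nn * n₂))
      = Sum.elim (fun (_ : Fin n₁) => (n₁:ℝ) * (nn * n₂)) (fun (_ : Fin n₂) => (n₁:ℝ) * (nn * n₂))
      from funext fun w => by cases w <;> rfl]
    rw [sumElim_dotProduct_sumElim]
    simp only [dotProduct, Finset.sum_const, Finset.card_univ, Fintype.card_fin,
      nsmul_eq_mul, mul_zero, zero_mul, add_zero, Finset.sum_const_zero]
    ring
  -- assemble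
  have heq : nn * ((n₁:ℝ) * (nn*n₂)^2 - ((n₂:ℝ)^2 * x + (n₁:ℝ)*(n₂:ℝ)^4
      + (n₁:ℝ)^2 * y + (n₁:ℝ)^2*(n₂:ℝ)^3)) - ((n₁:ℝ) * (nn*n₂))^2 = 0 := by
    rw [← t1, ← t2, ← t3, ← hCz]
    rw [Matrix.sub_mulVec, Matrix.smul_mulVec, Matrix.sub_mulVec,
      dotProduct_sub, dotProduct_smul, dotProduct_sub]
    simp only [smul_eq_mul]
    try ring
  have hxy : (n₂:ℝ)^2 * x + (n₁:ℝ)^2 * y = 0 := by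
    have hnn' : nn = (n₁:ℝ) + (n₂:ℝ) := by rw [hnn]; push_cast; ring
    rw [hnn'] at heq
    have h' : ((n₁:ℝ) + (n₂:ℝ)) * ((n₂:ℝ)^2 * x + (n₁:ℝ)^2 * y) = 0 := by
      linear_combination -heq
    rcases mul_eq_zero.mp h' with h | h
    · exfalso
      have hq1 : (1:ℝ) ≤ (n₁:ℝ) := by exact_mod_cast hn1
      have hq2 : (1:ℝ) ≤ (n₂:ℝ) := by exact_mod_cast hn2
      linarith
    · exact h
  have hx0 : x = 0 ∧ y = 0 := by
    have hxnn : 0 ≤ x := Finset.sum_nonneg (fun i _ => mul_self_nonneg _)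
    have hynn : 0 ≤ y := Finset.sum_nonneg (fun i _ => mul_self_nonneg _)
    have hb1 : (1:ℝ) ≤ (n₁:ℝ) := by exact_mod_cast hn1
    have hb2 : (1:ℝ) ≤ (n₂:ℝ) := by exact_mod_cast hn2
    have hA : (0:ℝ) ≤ (n₂:ℝ)^2 * x := by positivity
    have hB : (0:ℝ) ≤ (n₁:ℝ)^2 * y := by positivity
    have hA0 : (n₂:ℝ)^2 * x = 0 := by linarith
    have hB0 : (n₁:ℝ)^2 * y = 0 := by linarith
    constructor
    · exact (mul_eq_zero.mp hA0).resolve_left (pow_ne_zero 2 (by linarith))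
    · exact (mul_eq_zero.mp hB0).resolve_left (pow_ne_zero 2 (by linarith))
  constructor
  · funext i
    have hsum : ∑ j, c₁ j * c₁ j = 0 := by rw [← hxd]; exact hx0.1
    have h' : c₁ i * c₁ i = 0 :=
      (Finset.sum_eq_zero_iff_of_nonneg
        (fun j _ => mul_self_nonneg (c₁ j))).1 hsum i (Finset.mem_univ i)
    have hci : c₁ i = 0 := mul_self_eq_zero.mp h'
    simp only [mulVec, dotProduct, transpose_apply, mul_one, Pi.zero_apply]
    simpa [hc₁] using hci
  · funext i
    have hsum : ∑ j, c₂ j * c₂ j = 0 := by rw [← hyd]; exact hx0.2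
    have h' : c₂ i * c₂ i = 0 :=
      (Finset.sum_eq_zero_iff_of_nonneg
        (fun j _ => mul_self_nonneg (c₂ j))).1 hsum i (Finset.mem_univ i)
    have hci : c₂ i = 0 := mul_self_eq_zero.mp h'
    simp only [mulVec, dotProduct, transpose_apply, mul_one, Pi.zero_apply]
    simpa [hc₂] using hci

lemma star_real {μ : Type*} [Fintype μ] (M : Matrix μ μ ℝ) : star M = Mᵀ := by
  ext i j
  simp [Matrix.star_eq_conjTranspose, conjTranspose_apply]

lemma isNormalM_real_iff {μ : Type*} [Fintype μ] [DecidableEq μ] (M : Matrix μ μ ℝ) :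
    IsNormalM M ↔ Mᵀ * M - M * Mᵀ = 0 := by
  rw [IsNormalM, star_real, sub_eq_zero]

lemma bigL_not_normal (hn1 : 1 ≤ n₁) (hn2 : 1 ≤ n₂)
    (M : Matrix (Fin n₁ ⊕ Fin n₂) (Fin n₁ ⊕ Fin n₂) ℝ)
    (hM : M = fromBlocks (L₁ + (n₂:ℝ) • 1) (-(ones (Fin n₁) (Fin n₂))) 0 L₂) :
    ¬ IsNormalM M := by
  rw [isNormalM_real_iff, sub_eq_zero]
  intro h
  have key := congrArg (fun N => ∑ i : Fin n₁, N (Sum.inl i) (Sum.inl i)) h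
  simp only [mul_apply, transpose_apply] at key
  have lhs : ∑ i : Fin n₁, ∑ k, M k (Sum.inl i) * M k (Sum.inl i)
      = ∑ i : Fin n₁, ∑ j : Fin n₁, ((L₁ + (n₂:ℝ) • 1) j i) * ((L₁ + (n₂:ℝ) • 1) j i) := by
    refine Finset.sum_congr rfl (fun i _ => ?_)
    rw [Fintype.sum_sum_type]
    simp [hM]
  have rhs : ∑ i : Fin n₁, ∑ k, M (Sum.inl i) k * M (Sum.inl i) k
      = (∑ i : Fin n₁, ∑ j : Fin n₁, ((L₁ + (n₂:ℝ) • 1) i j) * ((L₁ + (n₂:ℝ) • 1) i j))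
        + (n₁:ℝ) * (n₂:ℝ) := by
    have step : ∀ i : Fin n₁, ∑ k, M (Sum.inl i) k * M (Sum.inl i) k
        = (∑ j : Fin n₁, ((L₁ + (n₂:ℝ) • 1) i j) * ((L₁ + (n₂:ℝ) • 1) i j)) + (n₂:ℝ) := by
      intro i
      rw [Fintype.sum_sum_type]
      congr 1
      · simp [hM]
      · simp [hM, Finset.sum_const, Finset.card_univ]
    rw [Finset.sum_congr rfl (fun i _ => step i), Finset.sum_add_distrib]
    simp [Finset.sum_const, Finset.card_univ, mul_comm]
  rw [lhs, rhs, Finset.sum_comm] at key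
  have hb1 : (1:ℝ) ≤ (n₁:ℝ) := by exact_mod_cast hn1
  have hb2 : (1:ℝ) ≤ (n₂:ℝ) := by exact_mod_cast hn2
  nlinarith

end Core

section Bridge

variable {m k : Type*} [Fintype m] [Fintype k] [DecidableEq m] [DecidableEq k]

lemma map_mul_RC (A : Matrix m m ℝ) (B : Matrix m m ℝ) :
    (A * B).map (fun x => (x:ℂ)) = A.map (fun x => (x:ℂ)) * B.map (fun x => (x:ℂ)) := by
  ext i j
  simp only [Matrix.map_apply, mul_apply]
  push_cast
  rfl

lemma map_eq_zero_RC (A : Matrix m m ℝ) :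
    A.map (fun x => (x:ℂ)) = 0 ↔ A = 0 := by
  constructor
  · intro h; ext i j
    have := congrFun (congrFun h i) j
    simpa [Matrix.map_apply] using this
  · intro h; rw [h]; ext i j; simp

lemma bridge (M : Matrix m m ℝ) (hrow : M *ᵥ (fun _ => (1:ℝ)) = 0)
    (Q : Matrix m k ℂ) (hQ1 : Qᴴ * Q = 1) (hQ2 : Qᴴ *ᵥ (fun _ => (1:ℂ)) = 0)
    (hcard : Fintype.card k + 1 = Fintype.card m) :
    IsNormalM (Qᴴ * M.map (fun x => (x:ℂ)) * Q) ↔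
    ((Fintype.card m : ℝ) • 1 - ones m m) *
      ((Fintype.card m : ℝ) • (Mᵀ*M - M*Mᵀ) - Mᵀ * ones m m * M) *
      ((Fintype.card m : ℝ) • 1 - ones m m) = 0 := by
  set n : ℕ := Fintype.card m with hn
  have hn0 : (n:ℂ) ≠ 0 := Nat.cast_ne_zero.2 (by omega)
  set s : ℂ := ((n:ℂ))⁻¹ with hs
  have hs0 : s ≠ 0 := inv_ne_zero hn0
  set Mc : Matrix m m ℂ := M.map (fun x => (x:ℂ)) with hMc
  have hMch : Mcᴴ = Mᵀ.map (fun x => (x:ℂ)) := by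
    ext i j
    simp [hMc, conjTranspose_apply, Matrix.map_apply, transpose_apply]
  have hMcE : Mc * onesC m m = 0 := by
    ext i j
    have h' := congrFun hrow i
    simp only [mulVec, dotProduct, mul_one, Pi.zero_apply] at h'
    simp only [hMc, mul_apply, onesC_apply, Matrix.map_apply, mul_one, Matrix.zero_apply]
    exact_mod_cast h'
  have hproj : Q * Qᴴ = 1 - s • onesC m m := restrictor_proj hQ1 hQ2 hcard
  -- the compressed commutator
  set W : Matrix m m ℂ := Mcᴴ * Mc - s • (Mcᴴ * onesC m m * Mc) - Mc * Mcᴴ with hW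
  have hstarX : star (Qᴴ * Mc * Q) = Qᴴ * Mcᴴ * Q := by
    rw [Matrix.star_eq_conjTranspose]
    simp [conjTranspose_mul, Matrix.mul_assoc]
  have e1 : (Qᴴ * Mc * Q) * (Qᴴ * Mcᴴ * Q) = Qᴴ * (Mc * Mcᴴ) * Q := by
    calc (Qᴴ * Mc * Q) * (Qᴴ * Mcᴴ * Q) = ((Qᴴ * Mc) * (Q * Qᴴ)) * (Mcᴴ * Q) := by
          simp only [Matrix.mul_assoc]
      _ = ((Qᴴ * Mc) - s • ((Qᴴ * Mc) * onesC m m)) * (Mcᴴ * Q) := by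
          rw [hproj, Matrix.mul_sub, Matrix.mul_one, Matrix.mul_smul]
      _ = (Qᴴ * Mc) * (Mcᴴ * Q) := by
          rw [Matrix.mul_assoc Qᴴ Mc (onesC m m), hMcE, Matrix.mul_zero, smul_zero, sub_zero]
      _ = Qᴴ * (Mc * Mcᴴ) * Q := by simp only [Matrix.mul_assoc]
  have e2 : (Qᴴ * Mcᴴ * Q) * (Qᴴ * Mc * Q)
      = Qᴴ * (Mcᴴ * Mc - s • (Mcᴴ * onesC m m * Mc)) * Q := by
    calc (Qᴴ * Mcᴴ * Q) * (Qᴴ * Mc * Q) = ((Qᴴ * Mcᴴ) * (Q * Qᴴ)) * (Mc * Q) := by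
          simp only [Matrix.mul_assoc]
      _ = ((Qᴴ * Mcᴴ) - s • ((Qᴴ * Mcᴴ) * onesC m m)) * (Mc * Q) := by
          rw [hproj, Matrix.mul_sub, Matrix.mul_one, Matrix.mul_smul]
      _ = Qᴴ * (Mcᴴ * Mc - s • (Mcᴴ * onesC m m * Mc)) * Q := by
          simp only [Matrix.sub_mul, Matrix.smul_mul, Matrix.mul_sub,
            Matrix.mul_smul, Matrix.mul_assoc]
  have hWsplit : Qᴴ * W * Q
      = Qᴴ * (Mcᴴ * Mc - s • (Mcᴴ * onesC m m * Mc)) * Q - Qᴴ * (Mc * Mcᴴ) * Q := by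
    rw [hW]
    rw [show Mcᴴ * Mc - s • (Mcᴴ * onesC m m * Mc) - Mc * Mcᴴ
      = (Mcᴴ * Mc - s • (Mcᴴ * onesC m m * Mc)) - Mc * Mcᴴ from rfl]
    rw [Matrix.mul_sub, Matrix.sub_mul]
  have hiff1 : IsNormalM (Qᴴ * Mc * Q) ↔ Qᴴ * W * Q = 0 := by
    rw [IsNormalM, hstarX, e1, e2, hWsplit, sub_eq_zero]
    try exact eq_comm
  have hiff2 : Qᴴ * W * Q = 0 ↔ (Q * Qᴴ) * W * (Q * Qᴴ) = 0 := by
    constructor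
    · intro h
      calc (Q * Qᴴ) * W * (Q * Qᴴ) = Q * (Qᴴ * W * Q) * Qᴴ := by simp only [Matrix.mul_assoc]
        _ = 0 := by rw [h, Matrix.mul_zero, Matrix.zero_mul]
    · intro h
      calc Qᴴ * W * Q = (Qᴴ * Q) * (Qᴴ * (W * Q)) := by
            rw [hQ1, Matrix.one_mul, Matrix.mul_assoc]
        _ = (Qᴴ * Q) * (Qᴴ * (W * (Q * (Qᴴ * Q)))) := by rw [hQ1, Matrix.mul_one]
        _ = Qᴴ * ((Q * Qᴴ) * W * (Q * Qᴴ)) * Q := by simp only [Matrix.mul_assoc]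
        _ = 0 := by rw [h, Matrix.mul_zero, Matrix.zero_mul]
  have hsplit : (1 : Matrix m m ℂ) - s • onesC m m = s • ((n:ℂ) • 1 - onesC m m) := by
    rw [smul_sub, smul_smul, inv_mul_cancel₀ hn0, one_smul]
  have hPWP : (Q * Qᴴ) * W * (Q * Qᴴ)
      = (s * s) • (((n:ℂ) • 1 - onesC m m) * W * ((n:ℂ) • 1 - onesC m m)) := by
    rw [hproj, hsplit]
    simp only [Matrix.smul_mul, Matrix.mul_smul, smul_smul]
  have hiff3 : (Q * Qᴴ) * W * (Q * Qᴴ) = 0 ↔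
      ((n:ℂ) • 1 - onesC m m) * W * ((n:ℂ) • 1 - onesC m m) = 0 := by
    rw [hPWP, smul_eq_zero]
    constructor
    · intro h; exact h.resolve_left (mul_ne_zero hs0 hs0)
    · intro h; exact Or.inr h
  have hiff4 : ((n:ℂ) • 1 - onesC m m) * W * ((n:ℂ) • 1 - onesC m m) = 0 ↔
      ((n:ℂ) • 1 - onesC m m) * ((n:ℂ) • W) * ((n:ℂ) • 1 - onesC m m) = 0 := by
    rw [Matrix.mul_smul, Matrix.smul_mul, smul_eq_zero]
    constructor
    · intro h; exact Or.inr h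
    · intro h; exact h.resolve_left hn0
  -- map identifications
  have hOnes : (ones m m).map (fun x => (x:ℂ)) = onesC m m := by
    ext i j; simp [ones, onesC, Matrix.map_apply]
  have map_sub_RC : ∀ (A B : Matrix m m ℝ), (A - B).map (fun x => (x:ℂ))
      = A.map (fun x => (x:ℂ)) - B.map (fun x => (x:ℂ)) := by
    intro A B; ext i j
    simp [Matrix.map_apply, Matrix.sub_apply]
  have map_smul_RC : ∀ (A : Matrix m m ℝ), (((n:ℕ):ℝ) • A).map (fun x => (x:ℂ))
      = ((n:ℕ):ℂ) • A.map (fun x => (x:ℂ)) := by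
    intro A; ext i j
    simp [Matrix.map_apply]
  have hmapP : ((n:ℂ) • 1 - onesC m m)
      = (((n:ℝ) • 1 - ones m m : Matrix m m ℝ)).map (fun x => (x:ℂ)) := by
    rw [map_sub_RC, map_smul_RC, hOnes]
    congr 1
    ext i j
    by_cases h : i = j <;> simp [one_apply, h, Matrix.map_apply]
  have m1 : Mcᴴ * Mc = (Mᵀ * M).map (fun x => (x:ℂ)) := by
    rw [hMch, hMc, ← map_mul_RC]
  have m2 : Mc * Mcᴴ = (M * Mᵀ).map (fun x => (x:ℂ)) := by
    rw [hMch, hMc, ← map_mul_RC]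
  have m3 : Mcᴴ * onesC m m * Mc = (Mᵀ * ones m m * M).map (fun x => (x:ℂ)) := by
    rw [hMch, hMc, ← hOnes, ← map_mul_RC, ← map_mul_RC]
  have hmapW : (n:ℂ) • W
      = (((n:ℝ) • (Mᵀ*M - M*Mᵀ) - Mᵀ * ones m m * M)).map (fun x => (x:ℂ)) := by
    rw [map_sub_RC, map_smul_RC, map_sub_RC, ← m1, ← m2, ← m3, hW]
    rw [smul_sub, smul_sub, smul_smul, mul_inv_cancel₀ hn0, one_smul]
    module
  have hiff5 : ((n:ℂ) • 1 - onesC m m) * ((n:ℂ) • W) * ((n:ℂ) • 1 - onesC m m) = 0 ↔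
      ((n:ℝ) • 1 - ones m m) * ((n:ℝ) • (Mᵀ*M - M*Mᵀ) - Mᵀ * ones m m * M) *
        ((n:ℝ) • 1 - ones m m) = 0 := by
    rw [hmapP, hmapW, ← map_mul_RC, ← map_mul_RC, map_eq_zero_RC]
  exact hiff1.trans (hiff2.trans (hiff3.trans (hiff4.trans hiff5)))

end Bridge

end RN

/-- The directed join `Γ₁ →∨ Γ₂` is restricted-normal (i.e. `QᴴLQ` is
normal and `L` is not normal) iff `L₁` and `L₂` are both normal matrices. -/
theorem directed_join_restricted_normal_iff {n₁ n₂ : ℕ} (h₁ : 1 ≤ n₁) (h₂ : 1 ≤ n₂)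
    (A₁ : Matrix (Fin n₁) (Fin n₁) ℝ) (A₂ : Matrix (Fin n₂) (Fin n₂) ℝ)
    (hA₁ : IsAdj A₁) (hA₂ : IsAdj A₂)
    (L : Matrix (Fin n₁ ⊕ Fin n₂) (Fin n₁ ⊕ Fin n₂) ℝ)
    (hL : L = Matrix.fromBlocks
        (lap A₁ + (n₂ : ℝ) • (1 : Matrix (Fin n₁) (Fin n₁) ℝ))
        (-(Matrix.of fun _ _ => (1 : ℝ))) 0 (lap A₂))
    (Q : Matrix (Fin n₁ ⊕ Fin n₂) (Fin (n₁ + n₂ - 1)) ℂ) (hQ : IsRestrictor Q) :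
    (IsNormalM (Qᴴ * L.map (fun x => (x : ℂ)) * Q) ∧ ¬ IsNormalM L) ↔
      (IsNormalM (lap A₁) ∧ IsNormalM (lap A₂)) := by
  obtain ⟨hQ1, hQ2⟩ := hQ
  have hL' : L = Matrix.fromBlocks (lap A₁ + (n₂:ℝ) • 1)
      (-(RN.ones (Fin n₁) (Fin n₂))) 0 (lap A₂) := hL
  have hr1 : lap A₁ *ᵥ (fun _ => (1:ℝ)) = 0 := RN.lap_mulVec_ones A₁
  have hr2 : lap A₂ *ᵥ (fun _ => (1:ℝ)) = 0 := RN.lap_mulVec_ones A₂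
  have hrow1 : ∀ i, ∑ j, lap A₁ i j = 0 := fun i => by
    simpa [mulVec, dotProduct] using congrFun hr1 i
  have hrow2 : ∀ i, ∑ j, lap A₂ i j = 0 := fun i => by
    simpa [mulVec, dotProduct] using congrFun hr2 i
  have hrowL : L *ᵥ (fun _ => (1:ℝ)) = 0 := by
    rw [hL']
    funext x
    cases x with
    | inl i =>
      simp only [mulVec, dotProduct, mul_one, Fintype.sum_sum_type, fromBlocks_apply₁₁,
        fromBlocks_apply₁₂, Matrix.add_apply, Matrix.smul_apply, one_apply, Matrix.neg_apply, RN.ones_apply,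
        Pi.zero_apply, smul_eq_mul, mul_ite, mul_one, mul_zero]
      rw [Finset.sum_add_distrib, hrow1 i, Finset.sum_ite_eq]
      simp [Finset.sum_const, Finset.card_univ]
    | inr i =>
      simp only [mulVec, dotProduct, mul_one, Fintype.sum_sum_type, fromBlocks_apply₂₁,
        fromBlocks_apply₂₂, Matrix.zero_apply, Finset.sum_const_zero, zero_add,
        Pi.zero_apply]
      exact hrow2 i
  have hcardk : Fintype.card (Fin (n₁ + n₂ - 1)) + 1 = Fintype.card (Fin n₁ ⊕ Fin n₂) := by
    simp only [Fintype.card_fin, Fintype.card_sum]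
    omega
  have hbridge := RN.bridge L hrowL Q hQ1 hQ2 hcardk
  have hcast : (Fintype.card (Fin n₁ ⊕ Fin n₂) : ℝ) = ((n₁ + n₂ : ℕ) : ℝ) := by
    simp [Fintype.card_sum]
  rw [hcast] at hbridge
  have hnotn : ¬ IsNormalM L := RN.bigL_not_normal h₁ h₂ L hL'
  constructor
  · rintro ⟨hnorm, -⟩
    have hN0 := hbridge.mp hnorm
    have hbal := RN.balanced_of_core_zero h₁ h₂ L hL' hr1 hr2 hN0
    have hcore := RN.core_identity L hL' hr1 hbal.1 hr2 hbal.2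
    rw [hcore, ← Matrix.fromBlocks_zero] at hN0
    obtain ⟨hK1, -, -, hK2⟩ := Matrix.fromBlocks_inj.mp hN0
    have hp : (((n₁ + n₂ : ℕ) : ℝ))^3 ≠ 0 :=
      pow_ne_zero 3 (Nat.cast_ne_zero.2 (by omega))
    constructor
    · rw [RN.isNormalM_real_iff]
      exact (smul_eq_zero.mp hK1).resolve_left hp
    · rw [RN.isNormalM_real_iff]
      exact (smul_eq_zero.mp hK2).resolve_left hp
  · rintro ⟨hn1, hn2⟩
    have hbal1 := RN.lap_balanced hA₁ hn1
    have hbal2 := RN.lap_balanced hA₂ hn2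
    have hK1 : (lap A₁)ᵀ * lap A₁ - lap A₁ * (lap A₁)ᵀ = 0 :=
      (RN.isNormalM_real_iff _).mp hn1
    have hK2 : (lap A₂)ᵀ * lap A₂ - lap A₂ * (lap A₂)ᵀ = 0 :=
      (RN.isNormalM_real_iff _).mp hn2
    have hcore := RN.core_identity L hL' hr1 hbal1 hr2 hbal2
    refine ⟨hbridge.mpr ?_, hnotn⟩
    rw [hcore, hK1, hK2]
    simp
end

section
/- Let Γ be a digraph of order n with vertex set V and adjacency matrix A, and suppose Γ is not balanced. Then Γ is a directed join of two balanced digraphs — i.e., there exists a set S ⊆ V with S ≠ ∅ and S ≠ V such that A i j = 1 and A j i = 0 for all i ∈ S and j ∉ S, and the induced subdigraphs on S and on V∖S are each balanced — if and only if n divides ι(i) − ι(j) (as integers) for all vertices i, j ∈ V. -/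
open Matrix

/-- Imbalance of a vertex: `ι(i) = d⁺(i) - d⁻(i)`. -/
noncomputable def imb {m : Type*} [Fintype m] (A : Matrix m m ℝ) (i : m) : ℝ :=
  (∑ j, A i j) - ∑ j, A j i

/-- A non-balanced digraph is a directed join of two balanced digraphs
iff `n ∣ ι(i) - ι(j)` (as integers) for all vertices `i, j`. -/
theorem directed_join_of_balanced_iff_imbalance {n : ℕ}
    (A : Matrix (Fin n) (Fin n) ℝ) (hA : IsAdj A) (hnb : ¬ Bal A) :
    (∃ S : Finset (Fin n), S.Nonempty ∧ S ≠ Finset.univ ∧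
        (∀ i ∈ S, ∀ j ∉ S, A i j = 1 ∧ A j i = 0) ∧
        (∀ i ∈ S, ∑ j ∈ S, A i j = ∑ j ∈ S, A j i) ∧
        (∀ i ∈ Sᶜ, ∑ j ∈ Sᶜ, A i j = ∑ j ∈ Sᶜ, A j i)) ↔
      (∀ i j, ∃ z : ℤ, imb A i - imb A j = (n : ℝ) * z) := by
  classical
  have hn : 0 < n := by
    by_contra h
    push_neg at h
    interval_cases n
    exact hnb (fun i => i.elim0)
  have hnR : (0 : ℝ) < n := by exact_mod_cast hn
  obtain ⟨hA01, hAdiag⟩ := hA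
  have h0le : ∀ i j, 0 ≤ A i j := fun i j => by rcases hA01 i j with h | h <;> simp [h]
  have hle1 : ∀ i j, A i j ≤ 1 := fun i j => by rcases hA01 i j with h | h <;> simp [h]
  constructor
  · rintro ⟨S, hSne, hSuniv, hcross, hbS, hbC⟩
    have h1 : S.card ≤ n := by simpa using S.card_le_univ
    have hcard : ((Sᶜ.card : ℝ)) = (n : ℝ) - S.card := by
      rw [Finset.card_compl]
      simp [Nat.cast_sub h1]
    have himbS : ∀ i ∈ S, imb A i = (n : ℝ) - S.card := by
      intro i hi
      unfold imb
      rw [← Finset.sum_add_sum_compl S (fun j => A i j),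
          ← Finset.sum_add_sum_compl S (fun j => A j i)]
      have h2 : ∑ j ∈ Sᶜ, A i j = ((Sᶜ.card : ℝ)) := by
        rw [Finset.sum_congr rfl (fun j hj => (hcross i hi j (Finset.mem_compl.mp hj)).1)]
        simp
      have h3 : ∑ j ∈ Sᶜ, A j i = 0 :=
        Finset.sum_eq_zero (fun j hj => (hcross i hi j (Finset.mem_compl.mp hj)).2)
      rw [h2, h3, hbS i hi, hcard]
      ring
    have himbC : ∀ i ∉ S, imb A i = -(S.card : ℝ) := by
      intro i hi
      unfold imb
      rw [← Finset.sum_add_sum_compl S (fun j => A i j),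
          ← Finset.sum_add_sum_compl S (fun j => A j i)]
      have h2 : ∑ j ∈ S, A i j = 0 :=
        Finset.sum_eq_zero (fun j hj => (hcross j hj i hi).2)
      have h3 : ∑ j ∈ S, A j i = (S.card : ℝ) := by
        rw [Finset.sum_congr rfl (fun j hj => (hcross j hj i hi).1)]
        simp
      rw [h2, h3, hbC i (Finset.mem_compl.mpr hi)]
      ring
    intro i j
    by_cases hi : i ∈ S <;> by_cases hj : j ∈ S
    · exact ⟨0, by rw [himbS i hi, himbS j hj]; ring⟩
    · exact ⟨1, by rw [himbS i hi, himbC j hj]; push_cast; ring⟩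
    · exact ⟨-1, by rw [himbC i hi, himbS j hj]; push_cast; ring⟩
    · exact ⟨0, by rw [himbC i hi, himbC j hj]; ring⟩
  · intro hdvd
    have hout_ub : ∀ i, ∑ j, A i j ≤ (n : ℝ) - 1 := by
      intro i
      rw [← Finset.sum_erase Finset.univ (hAdiag i)]
      calc ∑ j ∈ Finset.univ.erase i, A i j ≤ ∑ _j ∈ Finset.univ.erase i, (1 : ℝ) :=
            Finset.sum_le_sum (fun j _ => hle1 i j)
        _ = (n : ℝ) - 1 := by
            rw [Finset.sum_const]
            simp [Finset.card_erase_of_mem, Nat.cast_sub hn]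
    have hin_ub : ∀ i, ∑ j, A j i ≤ (n : ℝ) - 1 := by
      intro i
      rw [← Finset.sum_erase (f := fun j => A j i) Finset.univ (hAdiag i)]
      calc ∑ j ∈ Finset.univ.erase i, A j i ≤ ∑ _j ∈ Finset.univ.erase i, (1 : ℝ) :=
            Finset.sum_le_sum (fun j _ => hle1 j i)
        _ = (n : ℝ) - 1 := by
            rw [Finset.sum_const]
            simp [Finset.card_erase_of_mem, Nat.cast_sub hn]
    have himb_lt : ∀ i, imb A i < (n : ℝ) := by
      intro i
      unfold imb
      have h1 := hout_ub i
      have h2 : (0:ℝ) ≤ ∑ j, A j i := Finset.sum_nonneg (fun j _ => h0le j i)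
      linarith
    have himb_gt : ∀ i, -(n : ℝ) < imb A i := by
      intro i
      unfold imb
      have h1 := hin_ub i
      have h2 : (0:ℝ) ≤ ∑ j, A i j := Finset.sum_nonneg (fun j _ => h0le i j)
      linarith
    have hsum0 : ∑ i, imb A i = 0 := by
      unfold imb
      rw [Finset.sum_sub_distrib, Finset.sum_comm (f := fun i j => A j i)]
      exact sub_self _
    -- the congruence argument
    have key_eq : ∀ i j, imb A i - imb A j < (n:ℝ) → -(n:ℝ) < imb A i - imb A j →
        imb A i = imb A j := by
      intro i j h1 h2
      obtain ⟨z, hz⟩ := hdvd i j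
      have hz1 : (z : ℝ) < 1 := by
        have : (n:ℝ) * z < (n:ℝ) * 1 := by rw [mul_one]; linarith [hz]
        exact lt_of_mul_lt_mul_left this (le_of_lt hnR)
      have hz2 : (-1 : ℝ) < (z : ℝ) := by
        have : (n:ℝ) * (-1) < (n:ℝ) * z := by linarith [hz]
        exact lt_of_mul_lt_mul_left this (le_of_lt hnR)
      have hz0 : z = 0 := by
        have a1 : z < 1 := by exact_mod_cast hz1
        have a2 : (-1:ℤ) < z := by exact_mod_cast hz2
        omega
      rw [hz0] at hz
      push_cast at hz
      linarith
    have key_n : ∀ i j, 0 < imb A i - imb A j → imb A i - imb A j < 2 * n →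
        imb A i - imb A j = n := by
      intro i j h1 h2
      obtain ⟨z, hz⟩ := hdvd i j
      have hz1 : (z : ℝ) < 2 := by
        have : (n:ℝ) * z < (n:ℝ) * 2 := by linarith [hz]
        exact lt_of_mul_lt_mul_left this (le_of_lt hnR)
      have hz2 : (0 : ℝ) < (z : ℝ) := by
        have : (n:ℝ) * 0 < (n:ℝ) * z := by linarith [hz]
        exact lt_of_mul_lt_mul_left this (le_of_lt hnR)
      have hz0 : z = 1 := by
        have a1 : z < 2 := by exact_mod_cast hz1
        have a2 : (0:ℤ) < z := by exact_mod_cast hz2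
        omega
      rw [hz0] at hz
      push_cast at hz
      linarith
    -- existence of positive and negative imbalance
    have hex : ∃ i, imb A i ≠ 0 := by
      by_contra h
      push_neg at h
      exact hnb (fun i => by have := h i; unfold imb at this; linarith)
    obtain ⟨i0, hi0⟩ := hex
    have hpos : ∃ i, 0 < imb A i := by
      by_contra h
      push_neg at h
      have h2 : ∑ i, (-imb A i) = 0 := by
        rw [Finset.sum_neg_distrib, hsum0, neg_zero]
      have h3 := (Finset.sum_eq_zero_iff_of_nonneg
        (fun i _ => neg_nonneg.mpr (h i))).mp h2 i0 (Finset.mem_univ i0)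
      exact hi0 (by linarith [h3, neg_eq_zero.mp h3])
    have hneg : ∃ i, imb A i < 0 := by
      by_contra h
      push_neg at h
      have h3 := (Finset.sum_eq_zero_iff_of_nonneg
        (fun i _ => h i)).mp hsum0 i0 (Finset.mem_univ i0)
      exact hi0 h3
    obtain ⟨iS, hiS⟩ := hpos
    obtain ⟨iC, hiC⟩ := hneg
    set S : Finset (Fin n) := Finset.univ.filter (fun i => 0 < imb A i) with hSdef
    have hmemS : ∀ i, i ∈ S ↔ 0 < imb A i := by intro i; simp [hSdef]
    have hmemC : ∀ i, i ∉ S ↔ imb A i ≤ 0 := by intro i; simp [hSdef, not_lt]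
    have hSne : S.Nonempty := ⟨iS, (hmemS iS).mpr hiS⟩
    have hiCnS : iC ∉ S := (hmemC iC).mpr (le_of_lt hiC)
    have hSuniv : S ≠ Finset.univ := fun h => hiCnS (h ▸ Finset.mem_univ iC)
    -- constant values
    have himbS : ∀ i ∈ S, imb A i = imb A iS := by
      intro i hi
      have hi' := (hmemS i).mp hi
      exact key_eq i iS (by linarith [himb_lt i]) (by linarith [himb_lt iS])
    have himbC : ∀ i ∉ S, imb A i = imb A iC := by
      intro i hi
      have hi' := (hmemC i).mp hi
      exact key_eq i iC (by linarith [himb_gt iC]) (by linarith [himb_gt i])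
    have hcrossval : imb A iS - imb A iC = n :=
      key_n iS iC (by linarith) (by linarith [himb_lt iS, himb_gt iC])
    have hsc : S.card + Sᶜ.card = n := by
      rw [Finset.card_add_card_compl]
      simp
    have hscR : (S.card : ℝ) + (Sᶜ.card : ℝ) = n := by exact_mod_cast hsc
    have hsplit : (S.card : ℝ) * imb A iS + (Sᶜ.card : ℝ) * imb A iC = 0 := by
      have e1 : ∑ i ∈ S, imb A i = (S.card : ℝ) * imb A iS := by
        rw [Finset.sum_congr rfl himbS, Finset.sum_const, nsmul_eq_mul]
      have e2 : ∑ i ∈ Sᶜ, imb A i = (Sᶜ.card : ℝ) * imb A iC := by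
        rw [Finset.sum_congr rfl (fun i hi => himbC i (Finset.mem_compl.mp hi)),
          Finset.sum_const, nsmul_eq_mul]
      have := Finset.sum_add_sum_compl S (imb A)
      rw [e1, e2, hsum0] at this
      exact this
    have hval : imb A iS = (Sᶜ.card : ℝ) := by
      have h1 : (n:ℝ) * (imb A iS - Sᶜ.card) = 0 := by
        nlinarith [hsplit, hcrossval, hscR]
      rcases mul_eq_zero.mp h1 with h | h
      · exact absurd h (ne_of_gt hnR)
      · linarith
    have hvalC : imb A iC = -(S.card : ℝ) := by linarith
    -- cross sums
    have hXY : (∑ i ∈ S, ∑ j ∈ Sᶜ, A i j) - (∑ i ∈ S, ∑ j ∈ Sᶜ, A j i)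
        = (S.card : ℝ) * Sᶜ.card := by
      have h1 : ∑ i ∈ S, imb A i = (S.card : ℝ) * Sᶜ.card := by
        rw [Finset.sum_congr rfl (fun i hi => (himbS i hi).trans hval),
          Finset.sum_const, nsmul_eq_mul]
      have e1 : ∑ i ∈ S, ∑ j, A i j
          = (∑ i ∈ S, ∑ j ∈ S, A i j) + ∑ i ∈ S, ∑ j ∈ Sᶜ, A i j := by
        rw [← Finset.sum_add_distrib]
        exact Finset.sum_congr rfl (fun i _ => (Finset.sum_add_sum_compl S _).symm)
      have e2 : ∑ i ∈ S, ∑ j, A j i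
          = (∑ i ∈ S, ∑ j ∈ S, A j i) + ∑ i ∈ S, ∑ j ∈ Sᶜ, A j i := by
        rw [← Finset.sum_add_distrib]
        exact Finset.sum_congr rfl (fun i _ => (Finset.sum_add_sum_compl S _).symm)
      have e3 : ∑ i ∈ S, ∑ j ∈ S, A i j = ∑ i ∈ S, ∑ j ∈ S, A j i := Finset.sum_comm
      have h2 : ∑ i ∈ S, imb A i
          = (∑ i ∈ S, ∑ j ∈ Sᶜ, A i j) - (∑ i ∈ S, ∑ j ∈ Sᶜ, A j i) := by
        unfold imb
        rw [Finset.sum_sub_distrib, e1, e2, e3]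
        ring
      linarith
    have hX_le : (∑ i ∈ S, ∑ j ∈ Sᶜ, A i j) ≤ (S.card : ℝ) * Sᶜ.card := by
      calc (∑ i ∈ S, ∑ j ∈ Sᶜ, A i j) ≤ ∑ _i ∈ S, ∑ _j ∈ Sᶜ, (1:ℝ) :=
            Finset.sum_le_sum (fun i _ => Finset.sum_le_sum (fun j _ => hle1 i j))
        _ = (S.card : ℝ) * Sᶜ.card := by simp [mul_comm]
    have hY_ge : (0:ℝ) ≤ ∑ i ∈ S, ∑ j ∈ Sᶜ, A j i :=
      Finset.sum_nonneg (fun i _ => Finset.sum_nonneg (fun j _ => h0le j i))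
    have hY0 : ∑ i ∈ S, ∑ j ∈ Sᶜ, A j i = 0 := by linarith
    have hX : ∑ i ∈ S, ∑ j ∈ Sᶜ, A i j = (S.card : ℝ) * Sᶜ.card := by linarith
    have hA0 : ∀ i ∈ S, ∀ j ∈ Sᶜ, A j i = 0 := by
      intro i hi j hj
      have houter := (Finset.sum_eq_zero_iff_of_nonneg
        (fun i (_ : i ∈ S) => Finset.sum_nonneg (fun j _ => h0le j i))).mp hY0
      exact (Finset.sum_eq_zero_iff_of_nonneg
        (fun j (_ : j ∈ Sᶜ) => h0le j i)).mp (houter i hi) j hj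
    have hA1 : ∀ i ∈ S, ∀ j ∈ Sᶜ, A i j = 1 := by
      have h0 : ∑ i ∈ S, ∑ j ∈ Sᶜ, (1 - A i j) = 0 := by
        have e : ∑ i ∈ S, ∑ j ∈ Sᶜ, ((1:ℝ) - A i j)
            = (∑ _i ∈ S, ∑ _j ∈ Sᶜ, (1:ℝ)) - ∑ i ∈ S, ∑ j ∈ Sᶜ, A i j := by
          rw [← Finset.sum_sub_distrib]
          exact Finset.sum_congr rfl (fun i _ => Finset.sum_sub_distrib _ _)
        rw [e, hX]
        simp [mul_comm]
      intro i hi j hj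
      have houter := (Finset.sum_eq_zero_iff_of_nonneg
        (fun i (_ : i ∈ S) => Finset.sum_nonneg
          (fun j (_ : j ∈ Sᶜ) => by linarith [hle1 i j]))).mp h0
      have hinner := (Finset.sum_eq_zero_iff_of_nonneg
        (fun j (_ : j ∈ Sᶜ) => by linarith [hle1 i j])).mp (houter i hi) j hj
      linarith
    refine ⟨S, hSne, hSuniv, ?_, ?_, ?_⟩
    · intro i hi j hj
      exact ⟨hA1 i hi j (Finset.mem_compl.mpr hj), hA0 i hi j (Finset.mem_compl.mpr hj)⟩
    · intro i hi
      have h1 : imb A i = (Sᶜ.card : ℝ) := (himbS i hi).trans hval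
      have h2 : ∑ j ∈ Sᶜ, A i j = (Sᶜ.card : ℝ) := by
        rw [Finset.sum_congr rfl (fun j hj => hA1 i hi j hj)]
        simp
      have h3 : ∑ j ∈ Sᶜ, A j i = 0 :=
        Finset.sum_eq_zero (fun j hj => hA0 i hi j hj)
      have h4 : imb A i = (∑ j ∈ S, A i j + ∑ j ∈ Sᶜ, A i j)
          - (∑ j ∈ S, A j i + ∑ j ∈ Sᶜ, A j i) := by
        unfold imb
        rw [Finset.sum_add_sum_compl, Finset.sum_add_sum_compl]
      linarith
    · intro i hi
      have hi' : i ∉ S := Finset.mem_compl.mp hi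
      have h1 : imb A i = -(S.card : ℝ) := (himbC i hi').trans hvalC
      have h2 : ∑ j ∈ S, A i j = 0 :=
        Finset.sum_eq_zero (fun j hj => hA0 j hj i hi)
      have h3 : ∑ j ∈ S, A j i = (S.card : ℝ) := by
        rw [Finset.sum_congr rfl (fun j hj => hA1 j hj i hi)]
        simp
      have h4 : imb A i = (∑ j ∈ S, A i j + ∑ j ∈ Sᶜ, A i j)
          - (∑ j ∈ S, A j i + ∑ j ∈ Sᶜ, A j i) := by
        unfold imb
        rw [Finset.sum_add_sum_compl, Finset.sum_add_sum_compl]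
      linarith
end

section
/- Let Γ be a digraph of order n ≥ 1 with Laplacian L, let Q be a restrictor matrix of order n, and let P = I − (1/n)·e·eᵀ be the orthogonal projector onto the orthogonal complement of e. Then QᴴLQ is a normal matrix if and only if P·L is a normal matrix. -/
open Matrix

/-- Row sums of the (complexified) Laplacian vanish. -/
lemma lapC_mul_allones {m : ℕ} (A : Matrix (Fin m) (Fin m) ℝ) :
    lapC A * (Matrix.of fun _ _ => (1:ℂ)) = 0 := by
  ext i k
  simp only [Matrix.mul_apply, Matrix.of_apply, mul_one, Matrix.zero_apply,
    lapC, lap, Matrix.map_apply, Matrix.sub_apply, Matrix.diagonal_apply]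
  push_cast
  rw [Finset.sum_sub_distrib]
  simp [apply_ite (fun x : ℝ => (x:ℂ)), Finset.sum_ite_eq]

/-- A restrictor matrix satisfies `Q Qᴴ = I - (1/n) e eᴴ`. -/
lemma QQH {m : ℕ} (Q : Matrix (Fin (m+1)) (Fin m) ℂ) (hQ : IsRestrictor Q) :
    Q * Qᴴ = (1 : Matrix (Fin (m+1)) (Fin (m+1)) ℂ)
      - (((m+1 : ℕ) : ℂ))⁻¹ • (Matrix.of fun _ _ => (1:ℂ)) := by
  have hne : ((m+1 : ℕ) : ℂ) ≠ 0 := Nat.cast_ne_zero.mpr (Nat.succ_ne_zero m)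
  set c : ℂ := ((Real.sqrt ((m:ℝ)+1) : ℝ) : ℂ)⁻¹ with hc
  have hcconj : (starRingEnd ℂ) c = c := by simp [hc]
  have hcstar : star c = c := hcconj
  have hcc : c * c = (((m+1 : ℕ) : ℂ))⁻¹ := by
    have h1 : (Real.sqrt ((m:ℝ)+1)) * Real.sqrt ((m:ℝ)+1) = (m:ℝ)+1 :=
      Real.mul_self_sqrt (by positivity)
    rw [hc, ← mul_inv, ← Complex.ofReal_mul, h1]
    push_cast
    ring
  set U : Matrix (Fin (m+1)) (Fin (m+1)) ℂ :=
    fun i j => if h : (j : ℕ) < m then Q i ⟨j, h⟩ else c with hU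
  have hcol : ∀ j : Fin m, ∑ i, (starRingEnd ℂ) (Q i j) = 0 := by
    intro j
    have := congrFun hQ.2 j
    simpa [Matrix.mulVec, dotProduct, Matrix.conjTranspose_apply] using this
  have hcol' : ∀ j : Fin m, ∑ i, Q i j = 0 := by
    intro j
    have := congrArg (starRingEnd ℂ) (hcol j)
    simpa [map_sum] using this
  have hUU : Uᴴ * U = 1 := by
    ext j k
    simp only [Matrix.mul_apply, Matrix.conjTranspose_apply]
    simp only [hU]
    by_cases hj : (j : ℕ) < m <;> by_cases hk : (k : ℕ) < m
    · simp only [dif_pos hj, dif_pos hk]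
      have h1 := congrFun (congrFun hQ.1 ⟨j, hj⟩) ⟨k, hk⟩
      simp only [Matrix.mul_apply, Matrix.conjTranspose_apply] at h1
      rw [h1]
      have h2 : (j = k) ↔ ((⟨(j:ℕ), hj⟩ : Fin m) = ⟨(k:ℕ), hk⟩) := by
        constructor <;> intro h
        · subst h; rfl
        · exact Fin.ext (by simpa using congrArg Fin.val h)
      simp [Matrix.one_apply, h2]
    · have hjk : j ≠ k := by rintro rfl; exact hk hj
      simp only [dif_pos hj, dif_neg hk, Matrix.one_apply, if_neg hjk]
      rw [← Finset.sum_mul]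
      simp only [Complex.star_def, hcol]
      ring
    · have hjk : j ≠ k := by rintro rfl; exact hj hk
      simp only [dif_neg hj, dif_pos hk, Matrix.one_apply, if_neg hjk]
      rw [← Finset.mul_sum, hcol']
      ring
    · have hjk : j = k := by
        have hj' : (j : ℕ) = m := Nat.le_antisymm (Nat.lt_succ_iff.mp j.isLt) (Nat.le_of_not_lt hj)
        have hk' : (k : ℕ) = m := Nat.le_antisymm (Nat.lt_succ_iff.mp k.isLt) (Nat.le_of_not_lt hk)
        exact Fin.ext (hj'.trans hk'.symm)
      simp only [dif_neg hj, dif_neg hk, Matrix.one_apply, if_pos hjk, Complex.star_def, hcconj,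
        Finset.sum_const, Finset.card_univ, Fintype.card_fin, nsmul_eq_mul, hcc]
      exact mul_inv_cancel₀ hne
  have hUU' : U * Uᴴ = 1 := mul_eq_one_comm.mp hUU
  have split : ∀ i i', (U * Uᴴ) i i' = (Q * Qᴴ) i i' + c * star c := by
    intro i i'
    rw [Matrix.mul_apply, Matrix.mul_apply, Fin.sum_univ_castSucc]
    congr 1
    · apply Finset.sum_congr rfl
      intro j _
      simp only [Matrix.conjTranspose_apply]
      simp [hU]
    · simp only [Matrix.conjTranspose_apply]
      simp [hU]
  ext i i'
  have h3 := (split i i').symm.trans (congrFun (congrFun hUU' i) i')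
  have h4 : (Q * Qᴴ) i i' = (1 : Matrix (Fin (m+1)) (Fin (m+1)) ℂ) i i' - c * star c := by
    linear_combination h3
  rw [h4, hcstar, hcc]
  simp [Matrix.sub_apply]

/-- With `P = I - (1/n)·e·eᵀ` the projector onto `e^⊥`,
`QᴴLQ` is normal iff `P·L` is normal. -/
theorem restricted_normal_iff_projected_normal {n : ℕ} (hn : 1 ≤ n)
    (A : Matrix (Fin n) (Fin n) ℝ) (hA : IsAdj A)
    (Q : Matrix (Fin n) (Fin (n - 1)) ℂ) (hQ : IsRestrictor Q)
    (P : Matrix (Fin n) (Fin n) ℂ)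
    (hP : P = (1 : Matrix (Fin n) (Fin n) ℂ) - ((n : ℂ))⁻¹ • (Matrix.of fun _ _ => (1 : ℂ))) :
    IsNormalM (Qᴴ * lapC A * Q) ↔ IsNormalM (P * lapC A) := by
  obtain ⟨m, rfl⟩ : ∃ m, n = m + 1 := ⟨n - 1, (Nat.succ_pred_eq_of_pos hn).symm⟩
  set L := lapC A with hLdef
  set M : Matrix (Fin (m+1)) (Fin (m+1)) ℂ := Matrix.of fun _ _ => 1 with hM
  have hne : ((m+1:ℕ):ℂ) ≠ 0 := Nat.cast_ne_zero.mpr (Nat.succ_ne_zero m)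
  have hLM : L * M = 0 := lapC_mul_allones A
  have hLP : L * P = L := by
    rw [hP, mul_sub, mul_one, Matrix.mul_smul, hLM]
    simp
  have hMH : Mᴴ = M := by
    ext i j; simp [hM, Matrix.conjTranspose_apply]
  have hPH : Pᴴ = P := by
    rw [hP, Matrix.conjTranspose_sub, Matrix.conjTranspose_smul, Matrix.conjTranspose_one, hMH]
    congr 1
    simp
  have hPLH : P * Lᴴ = Lᴴ := by
    have := congrArg Matrix.conjTranspose hLP
    rwa [Matrix.conjTranspose_mul, hPH] at this
  have hMM : M * M = ((m+1:ℕ):ℂ) • M := by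
    ext i j
    simp [hM, Matrix.mul_apply]
  have hPP : P * P = P := by
    rw [hP, sub_mul, one_mul, mul_sub, mul_one, Matrix.smul_mul, Matrix.mul_smul, hMM,
      smul_smul, smul_smul, mul_assoc, inv_mul_cancel₀ hne, mul_one]
    abel
  have hQQ : Q * Qᴴ = P := by
    rw [QQH Q hQ, hP]
  have hQHQ : Qᴴ * Q = 1 := hQ.1
  have hQP : Qᴴ * P = Qᴴ := by rw [← hQQ, ← Matrix.mul_assoc, hQHQ, Matrix.one_mul]
  have hPQ : P * Q = Q := by rw [← hQQ, Matrix.mul_assoc, hQHQ, Matrix.mul_one]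
  -- the common reformulation
  have key1 : IsNormalM (Qᴴ * L * Q) ↔
      Qᴴ * (Lᴴ * P * L) * Q = Qᴴ * (L * Lᴴ) * Q := by
    unfold IsNormalM
    rw [Matrix.star_eq_conjTranspose]
    have hstar : (Qᴴ * L * Q)ᴴ = Qᴴ * Lᴴ * Q := by
      simp [Matrix.conjTranspose_mul, Matrix.mul_assoc]
    rw [hstar]
    have e1 : Qᴴ * Lᴴ * Q * (Qᴴ * L * Q) = Qᴴ * (Lᴴ * P * L) * Q := by
      rw [← hQQ]
      simp only [Matrix.mul_assoc]
    have e2 : Qᴴ * L * Q * (Qᴴ * Lᴴ * Q) = Qᴴ * (L * Lᴴ) * Q := by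
      have : Qᴴ * L * Q * (Qᴴ * Lᴴ * Q) = Qᴴ * (L * P * Lᴴ) * Q := by
        rw [← hQQ]
        simp only [Matrix.mul_assoc]
      rw [this, hLP]
    rw [e1, e2]
  have key2 : IsNormalM (P * L) ↔
      Lᴴ * P * L = P * (L * Lᴴ) * P := by
    unfold IsNormalM
    rw [Matrix.star_eq_conjTranspose, Matrix.conjTranspose_mul, hPH]
    have e1 : Lᴴ * P * (P * L) = Lᴴ * (P * P) * L := by
      simp only [Matrix.mul_assoc]
    have e2 : P * L * (Lᴴ * P) = P * (L * Lᴴ) * P := by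
      simp only [Matrix.mul_assoc]
    rw [e1, e2, hPP]
  rw [key1, key2]
  constructor
  · intro h
    have h2 := congrArg (fun X => Q * X * Qᴴ) h
    have e1 : Q * (Qᴴ * (Lᴴ * P * L) * Q) * Qᴴ = (Q * Qᴴ) * (Lᴴ * P * L) * (Q * Qᴴ) := by
      simp only [Matrix.mul_assoc]
    have e2 : Q * (Qᴴ * (L * Lᴴ) * Q) * Qᴴ = (Q * Qᴴ) * (L * Lᴴ) * (Q * Qᴴ) := by
      simp only [Matrix.mul_assoc]
    rw [e1, e2, hQQ] at h2
    -- h2 : P * (Lᴴ * P * L) * P = P * (L * Lᴴ) * P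
    have e3 : P * (Lᴴ * P * L) * P = (P * Lᴴ) * P * (L * P) := by
      simp only [Matrix.mul_assoc]
    rw [e3, hPLH, hLP] at h2
    exact h2
  · intro h
    have h2 := congrArg (fun X => Qᴴ * X * Q) h
    have e1 : Qᴴ * (Lᴴ * P * L) * Q = Qᴴ * (Lᴴ * P * L) * Q := rfl
    have e2 : Qᴴ * (P * (L * Lᴴ) * P) * Q = (Qᴴ * P) * (L * Lᴴ) * (P * Q) := by
      simp only [Matrix.mul_assoc]
    rw [e2, hQP, hPQ] at h2
    exact h2
end

section
/- Let Γ be a digraph of order n with vertex set V, Laplacian L, and let Q be a restrictor matrix of order n. Fix any vertex k ∈ V. Then Γ is restricted-normal (i.e., QᴴLQ is normal and L is not normal) if and only if Γ is not balanced and for all i, j ∈ V∖{k}: (ι(i) − ι(k))·(ι(j) − ι(k)) = n·( ⟨L(e_i − e_k), L(e_j − e_k)⟩ − ⟨Lᵀ(e_i − e_k), Lᵀ(e_j − e_k)⟩ ), where e_i denotes the i-th standard basis vector and ⟨·,·⟩ the standard real inner product. -/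
open Matrix

namespace RNAux

noncomputable def JC (n : ℕ) : Matrix (Fin n) (Fin n) ℂ := Matrix.of fun _ _ => 1
noncomputable def JR (n : ℕ) : Matrix (Fin n) (Fin n) ℝ := Matrix.of fun _ _ => 1
noncomputable def PR (n : ℕ) : Matrix (Fin n) (Fin n) ℝ := 1 - (n:ℝ)⁻¹ • JR n

lemma herm_idem_trace_zero {m : Type*} [Fintype m] [DecidableEq m] (C : Matrix m m ℂ)
    (h1 : Cᴴ = C) (h2 : C * C = C) (h3 : C.trace = 0) : C = 0 := by
  have key : (Cᴴ * C).trace = 0 := by rw [h1, h2, h3]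
  have h4 : ∑ j, ∑ i, Complex.normSq (C i j) = 0 := by
    simp only [Matrix.trace, Matrix.diag, Matrix.mul_apply, conjTranspose_apply] at key
    have : ((∑ j, ∑ i, (Complex.normSq (C i j) : ℂ)) : ℂ) = 0 := by
      rw [← key]; congr 1; ext j; congr 1; ext i
      rw [Complex.star_def, ← Complex.normSq_eq_conj_mul_self]
    exact_mod_cast this
  ext i j
  have h5 : Complex.normSq (C i j) = 0 := by
    have hnn : ∀ p ∈ Finset.univ, (0:ℝ) ≤ ∑ i, Complex.normSq (C i p) :=
      fun p _ => Finset.sum_nonneg fun i _ => Complex.normSq_nonneg _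
    have := (Finset.sum_eq_zero_iff_of_nonneg hnn).mp h4 j (Finset.mem_univ _)
    exact (Finset.sum_eq_zero_iff_of_nonneg
      (fun q _ => Complex.normSq_nonneg _)).mp this i (Finset.mem_univ _)
  simpa using Complex.normSq_eq_zero.mp h5

variable {n : ℕ} (A : Matrix (Fin n) (Fin n) ℝ) (Q : Matrix (Fin n) (Fin (n-1)) ℂ)

lemma QH_mul_J (hQ2 : Qᴴ *ᵥ (fun _ => (1:ℂ)) = 0) : Qᴴ * JC n = 0 := by
  ext i j
  have := congrFun hQ2 i
  simpa [Matrix.mul_apply, JC, Matrix.mulVec, dotProduct] using this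

lemma J_mul_Q (hQ2 : Qᴴ *ᵥ (fun _ => (1:ℂ)) = 0) : JC n * Q = 0 := by
  ext i j
  have h := congrFun hQ2 j
  simp only [Matrix.mulVec, dotProduct, conjTranspose_apply, mul_one,
    Pi.zero_apply] at h
  have h2 := congrArg star h
  simpa [Matrix.mul_apply, JC, star_sum] using h2

lemma J_mul_J : JC n * JC n = (n : ℂ) • JC n := by
  ext i j; simp [Matrix.mul_apply, JC, Matrix.smul_apply]

lemma QQH (hn : n ≠ 0) (hQ1 : Qᴴ * Q = 1) (hQ2 : Qᴴ *ᵥ (fun _ => (1:ℂ)) = 0) :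
    Q * Qᴴ = 1 - (n : ℂ)⁻¹ • JC n := by
  have hnC : (n : ℂ) ≠ 0 := Nat.cast_ne_zero.mpr hn
  set C : Matrix (Fin n) (Fin n) ℂ := 1 - Q * Qᴴ - (n : ℂ)⁻¹ • JC n with hC
  have hJH : (JC n)ᴴ = JC n := by ext i j; simp [JC]
  have h1 : Cᴴ = C := by
    simp [hC, Matrix.conjTranspose_sub, Matrix.conjTranspose_smul, hJH,
      Matrix.conjTranspose_mul, Matrix.conjTranspose_one, mul_assoc]
  have hB1 : (Q * Qᴴ) * (Q * Qᴴ) = Q * Qᴴ := by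
    rw [Matrix.mul_assoc, ← Matrix.mul_assoc Qᴴ, hQ1, Matrix.one_mul]
  have hQJ : (Q * Qᴴ) * JC n = 0 := by
    rw [Matrix.mul_assoc, QH_mul_J Q hQ2, Matrix.mul_zero]
  have hJQ : JC n * (Q * Qᴴ) = 0 := by
    rw [← Matrix.mul_assoc, J_mul_Q Q hQ2, Matrix.zero_mul]
  have h2 : C * C = C := by
    have hJJ := J_mul_J (n := n)
    simp only [hC, Matrix.sub_mul, Matrix.mul_sub, Matrix.one_mul, Matrix.mul_one,
      Matrix.smul_mul, Matrix.mul_smul, hB1, hQJ, hJQ, hJJ, smul_zero, smul_smul,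
      sub_zero]
    rw [inv_mul_cancel₀ hnC]
    simp only [one_smul]
    abel_nf
    simp
  have h3 : C.trace = 0 := by
    have ht2 : (Q * Qᴴ).trace = ((n - 1 : ℕ) : ℂ) := by
      rw [Matrix.trace_mul_comm, hQ1]; simp [Matrix.trace_one]
    have ht3 : (JC n).trace = (n : ℂ) := by
      simp [Matrix.trace, Matrix.diag, JC]
    have hcast : ((n - 1 : ℕ) : ℂ) = (n : ℂ) - 1 := by
      have : 1 ≤ n := Nat.one_le_iff_ne_zero.mpr hn
      push_cast [Nat.cast_sub this]; ring
    rw [hC, Matrix.trace_sub, Matrix.trace_sub, Matrix.trace_smul, ht2, ht3, hcast,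
      Matrix.trace_one]
    simp [smul_eq_mul, inv_mul_cancel₀ hnC]
  have hz := herm_idem_trace_zero C h1 h2 h3
  rw [hC] at hz
  linear_combination (norm := abel) -hz

noncomputable def LTC (A : Matrix (Fin n) (Fin n) ℝ) : Matrix (Fin n) (Fin n) ℂ :=
  ((lap A)ᵀ).map (fun x => (x : ℂ))
noncomputable def SR (A : Matrix (Fin n) (Fin n) ℝ) : Matrix (Fin n) (Fin n) ℝ :=
  (lap A)ᵀ * lap A - lap A * (lap A)ᵀ - (n:ℝ)⁻¹ • vecMulVec (imb A) (imb A)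
noncomputable def SC (A : Matrix (Fin n) (Fin n) ℝ) : Matrix (Fin n) (Fin n) ℂ :=
  LTC A * lapC A - lapC A * LTC A
    - (n:ℂ)⁻¹ • vecMulVec (fun i => (imb A i : ℂ)) (fun i => (imb A i : ℂ))

lemma sum_imb : ∑ i, imb A i = 0 := by
  simp only [imb, Finset.sum_sub_distrib]
  rw [Finset.sum_comm]
  ring

lemma P_mul_apply (M : Matrix (Fin n) (Fin n) ℝ) (a b : Fin n) :
    (PR n * M) a b = M a b - (n:ℝ)⁻¹ * ∑ c, M c b := by
  simp [PR, JR, Matrix.sub_mul, Matrix.smul_mul, Matrix.sub_apply, Matrix.smul_apply,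
    Matrix.mul_apply, Matrix.one_apply, sub_mul, ite_mul, Finset.sum_sub_distrib,
    Finset.sum_ite_eq, Finset.mul_sum]

lemma mul_P_apply (M : Matrix (Fin n) (Fin n) ℝ) (a b : Fin n) :
    (M * PR n) a b = M a b - (n:ℝ)⁻¹ * ∑ d, M a d := by
  simp [PR, JR, Matrix.mul_sub, Matrix.mul_smul, Matrix.sub_apply, Matrix.smul_apply,
    Matrix.mul_apply, Matrix.one_apply, mul_sub, mul_ite, Finset.sum_sub_distrib,
    Finset.sum_ite_eq', Finset.mul_sum, mul_comm, ← Finset.sum_mul]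

lemma PMP_apply (M : Matrix (Fin n) (Fin n) ℝ) (a b : Fin n) :
    (PR n * M * PR n) a b =
      M a b - (n:ℝ)⁻¹ * (∑ d, M a d) - (n:ℝ)⁻¹ * (∑ c, M c b)
        + (n:ℝ)⁻¹ * ((n:ℝ)⁻¹ * ∑ c, ∑ d, M c d) := by
  rw [mul_P_apply, P_mul_apply]
  have h1 : ∑ d, (PR n * M) a d = ∑ d, M a d - (n:ℝ)⁻¹ * ∑ c, ∑ d, M c d := by
    have : ∀ d, (PR n * M) a d = M a d - (n:ℝ)⁻¹ * ∑ c, M c d :=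
      fun d => P_mul_apply M a d
    rw [Finset.sum_congr rfl (fun d _ => this d), Finset.sum_sub_distrib,
      ← Finset.mul_sum, Finset.sum_comm]
  rw [h1]
  ring

lemma PMP_zero_iff (hn : n ≠ 0) (M : Matrix (Fin n) (Fin n) ℝ) (k : Fin n) :
    PR n * M * PR n = 0 ↔ ∀ i j, M i j - M i k - M k j + M k k = 0 := by
  have hnR : (n:ℝ) ≠ 0 := Nat.cast_ne_zero.mpr hn
  constructor
  · intro h i j
    have e : ∀ a b, M a b - (n:ℝ)⁻¹ * (∑ d, M a d) - (n:ℝ)⁻¹ * (∑ c, M c b)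
        + (n:ℝ)⁻¹ * ((n:ℝ)⁻¹ * ∑ c, ∑ d, M c d) = 0 := by
      intro a b
      rw [← PMP_apply, h]
      rfl
    linarith [e i j, e i k, e k j, e k k]
  · intro h
    have hM : ∀ a b, M a b = M a k + M k b - M k k := fun a b => by linarith [h a b]
    have hrow : ∀ a, ∑ d, M a d = (n:ℝ) * M a k + (∑ d, M k d) - (n:ℝ) * M k k := by
      intro a
      rw [Finset.sum_congr rfl (fun d _ => hM a d), Finset.sum_sub_distrib,
        Finset.sum_add_distrib, Finset.sum_const, Finset.sum_const]
      simp [Finset.card_univ, nsmul_eq_mul]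
    have hcol : ∀ b, ∑ c, M c b = (∑ c, M c k) + (n:ℝ) * M k b - (n:ℝ) * M k k := by
      intro b
      rw [Finset.sum_congr rfl (fun c _ => hM c b), Finset.sum_sub_distrib,
        Finset.sum_add_distrib, Finset.sum_const, Finset.sum_const]
      simp [Finset.card_univ, nsmul_eq_mul]
    have hall : ∑ c, ∑ d, M c d =
        (n:ℝ) * (∑ c, M c k) + (n:ℝ) * (∑ d, M k d) - (n:ℝ) * ((n:ℝ) * M k k) := by
      rw [Finset.sum_congr rfl (fun c _ => hrow c), Finset.sum_sub_distrib,
        Finset.sum_add_distrib, Finset.sum_const, Finset.sum_const]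
      simp [Finset.card_univ, nsmul_eq_mul, ← Finset.mul_sum]
    ext a b
    rw [Matrix.zero_apply, PMP_apply, hrow a, hcol b, hall, hM a b]
    field_simp
    ring

lemma lap_row_sum (i : Fin n) : ∑ j, lap A i j = 0 := by
  simp [lap, Matrix.sub_apply, Matrix.diagonal_apply, Finset.sum_sub_distrib,
    Finset.sum_ite_eq]

lemma lap_col_sum (i : Fin n) : ∑ j, lap A j i = imb A i := by
  simp [lap, imb, Matrix.sub_apply, Matrix.diagonal_apply, Finset.sum_sub_distrib,
    Finset.sum_ite_eq']

lemma dot_single_sub (M : Matrix (Fin n) (Fin n) ℝ) (i j k : Fin n) :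
    (Pi.single i 1 - Pi.single k 1) ⬝ᵥ M *ᵥ (Pi.single j 1 - Pi.single k 1)
      = M i j - M i k - M k j + M k k := by
  simp [dotProduct, Matrix.mulVec, Pi.single_apply, Pi.sub_apply, sub_mul, mul_sub,
    Finset.sum_sub_distrib, ite_mul, mul_ite, Finset.sum_ite_eq, Finset.sum_ite_eq']
  ring

lemma mulVec_dot (M : Matrix (Fin n) (Fin n) ℝ) (u v : Fin n → ℝ) :
    (M *ᵥ u) ⬝ᵥ (M *ᵥ v) = u ⬝ᵥ (Mᵀ * M) *ᵥ v := by
  rw [← Matrix.mulVec_mulVec, Matrix.dotProduct_mulVec u Mᵀ (M *ᵥ v), Matrix.vecMul_transpose]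

lemma lapC_conjTranspose : (lapC A)ᴴ = LTC A := by
  ext i j
  simp [lapC, LTC, Matrix.conjTranspose_apply, Complex.conj_ofReal]

lemma LTC_conjTranspose : (LTC A)ᴴ = lapC A := by
  ext i j
  simp [lapC, LTC, Matrix.conjTranspose_apply, Complex.conj_ofReal]

lemma lapC_mul_J : lapC A * JC n = 0 := by
  ext i j
  simp only [Matrix.mul_apply, lapC, JC, Matrix.map_apply, Matrix.of_apply, mul_one,
    Matrix.zero_apply]
  rw [← Complex.ofReal_sum, lap_row_sum]
  simp

lemma J_mul_LTC : JC n * LTC A = 0 := by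
  ext i j
  simp only [Matrix.mul_apply, LTC, JC, Matrix.map_apply, Matrix.of_apply, one_mul,
    Matrix.zero_apply, Matrix.transpose_apply]
  rw [← Complex.ofReal_sum, lap_row_sum]
  simp

lemma LTC_mul_J_mul_lapC :
    LTC A * JC n * lapC A
      = vecMulVec (fun i => (imb A i : ℂ)) (fun i => (imb A i : ℂ)) := by
  have h1 : LTC A * JC n = Matrix.of fun i _ => (imb A i : ℂ) := by
    ext i j
    simp only [Matrix.mul_apply, LTC, JC, Matrix.map_apply, Matrix.of_apply, mul_one,
      Matrix.transpose_apply]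
    rw [← Complex.ofReal_sum, lap_col_sum]
  rw [h1]
  ext i j
  simp only [Matrix.mul_apply, lapC, Matrix.map_apply, Matrix.of_apply,
    Matrix.vecMulVec_apply]
  rw [← Finset.mul_sum, ← Complex.ofReal_sum, lap_col_sum]

lemma SC_eq_map : SC A = (SR A).map (fun x => (x : ℂ)) := by
  ext i j
  simp only [SC, SR, LTC, lapC, Matrix.sub_apply, Matrix.smul_apply, Matrix.mul_apply,
    Matrix.map_apply, Matrix.vecMulVec_apply, Matrix.transpose_apply, smul_eq_mul]
  push_cast
  ring

lemma PC_eq_map : (1 : Matrix (Fin n) (Fin n) ℂ) - (n:ℂ)⁻¹ • JC n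
    = (PR n).map (fun x => (x : ℂ)) := by
  ext i j
  simp only [PR, JR, JC, Matrix.sub_apply, Matrix.smul_apply, Matrix.map_apply,
    Matrix.of_apply, Matrix.one_apply, smul_eq_mul, mul_one]
  push_cast
  split <;> simp

lemma map_mul_map (X Y : Matrix (Fin n) (Fin n) ℝ) :
    (X.map (fun x => (x : ℂ))) * (Y.map (fun x => (x : ℂ)))
      = (X * Y).map (fun x => (x : ℂ)) := by
  ext i j
  simp only [Matrix.mul_apply, Matrix.map_apply]
  push_cast
  rfl

lemma map_eq_zero_iff (X : Matrix (Fin n) (Fin n) ℝ) :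
    X.map (fun x => (x : ℂ)) = 0 ↔ X = 0 := by
  constructor
  · intro h
    ext i j
    have := congrFun (congrFun h i) j
    simpa using this
  · intro h; rw [h]; ext i j; simp

lemma comm_eq (hn : n ≠ 0) (hQ1 : Qᴴ * Q = 1) (hQ2 : Qᴴ *ᵥ (fun _ => (1:ℂ)) = 0) :
    (Qᴴ * lapC A * Q)ᴴ * (Qᴴ * lapC A * Q) - (Qᴴ * lapC A * Q) * (Qᴴ * lapC A * Q)ᴴ
      = Qᴴ * SC A * Q := by
  have hQQ : Q * Qᴴ = 1 - (n : ℂ)⁻¹ • JC n := QQH Q hn hQ1 hQ2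
  have hMH : (Qᴴ * lapC A * Q)ᴴ = Qᴴ * LTC A * Q := by
    rw [Matrix.conjTranspose_mul, Matrix.conjTranspose_mul,
      Matrix.conjTranspose_conjTranspose, lapC_conjTranspose, Matrix.mul_assoc]
  rw [hMH]
  have e1 : (Qᴴ * LTC A * Q) * (Qᴴ * lapC A * Q)
      = Qᴴ * (LTC A * (Q * Qᴴ) * lapC A) * Q := by
    simp only [Matrix.mul_assoc]
  have e2 : (Qᴴ * lapC A * Q) * (Qᴴ * LTC A * Q)
      = Qᴴ * (lapC A * (Q * Qᴴ) * LTC A) * Q := by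
    simp only [Matrix.mul_assoc]
  rw [e1, e2, hQQ]
  have f1 : LTC A * (1 - (n:ℂ)⁻¹ • JC n) * lapC A
      = LTC A * lapC A
        - (n:ℂ)⁻¹ • vecMulVec (fun i => (imb A i : ℂ)) (fun i => (imb A i : ℂ)) := by
    rw [Matrix.mul_sub, Matrix.mul_one, Matrix.sub_mul, Matrix.mul_smul,
      Matrix.smul_mul, LTC_mul_J_mul_lapC]
  have f2 : lapC A * (1 - (n:ℂ)⁻¹ • JC n) * LTC A = lapC A * LTC A := by
    rw [Matrix.mul_sub, Matrix.mul_one, Matrix.mul_smul, lapC_mul_J, smul_zero,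
      sub_zero]
  rw [f1, f2, SC]
  simp only [Matrix.mul_sub, Matrix.sub_mul, Matrix.mul_smul, Matrix.smul_mul]
  abel

theorem main
    (hQ1 : Qᴴ * Q = 1) (hQ2 : Qᴴ *ᵥ (fun _ => (1:ℂ)) = 0) (k : Fin n) :
    ((Qᴴ * lapC A * Q)ᴴ * (Qᴴ * lapC A * Q) = (Qᴴ * lapC A * Q) * (Qᴴ * lapC A * Q)ᴴ
        ∧ ¬ ((lap A)ᵀ * lap A = lap A * (lap A)ᵀ)) ↔
      ((¬ ∀ i, ∑ j, A i j = ∑ j, A j i) ∧ ∀ i j, i ≠ k → j ≠ k →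
        (imb A i - imb A k) * (imb A j - imb A k) =
          (n : ℝ) *
            (((lap A) *ᵥ (Pi.single i 1 - Pi.single k 1) ⬝ᵥ
                (lap A) *ᵥ (Pi.single j 1 - Pi.single k 1)) -
              ((lap A)ᵀ *ᵥ (Pi.single i 1 - Pi.single k 1) ⬝ᵥ
                (lap A)ᵀ *ᵥ (Pi.single j 1 - Pi.single k 1)))) := by
  by_cases hn : n = 0
  · subst hn
    constructor
    · rintro ⟨-, hnot⟩
      exact absurd (by ext i j; exact i.elim0) hnot
    · rintro ⟨hb, -⟩
      exact absurd (fun i => i.elim0) hb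
  have hnR : (n:ℝ) ≠ 0 := Nat.cast_ne_zero.mpr hn
  -- normality of restricted matrix iff the real projected matrix vanishes
  have hM : ((Qᴴ * lapC A * Q)ᴴ * (Qᴴ * lapC A * Q)
      = (Qᴴ * lapC A * Q) * (Qᴴ * lapC A * Q)ᴴ) ↔ Qᴴ * SC A * Q = 0 := by
    rw [← sub_eq_zero, comm_eq A Q hn hQ1 hQ2]
  have hQS : Qᴴ * SC A * Q = 0 ↔ PR n * SR A * PR n = 0 := by
    constructor
    · intro h
      have hP : ((PR n).map (fun x => (x:ℂ))) * SC A * ((PR n).map (fun x => (x:ℂ))) = 0 := by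
        rw [← PC_eq_map, ← QQH Q hn hQ1 hQ2]
        calc (Q * Qᴴ) * SC A * (Q * Qᴴ) = Q * (Qᴴ * SC A * Q) * Qᴴ := by
              simp only [Matrix.mul_assoc]
          _ = 0 := by rw [h, Matrix.mul_zero, Matrix.zero_mul]
      rw [SC_eq_map, map_mul_map, map_mul_map, map_eq_zero_iff] at hP
      exact hP
    · intro h
      have hPQ : ((1 : Matrix (Fin n) (Fin n) ℂ) - (n:ℂ)⁻¹ • JC n) * Q = Q := by
        rw [Matrix.sub_mul, Matrix.one_mul, Matrix.smul_mul, J_mul_Q Q hQ2,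
          smul_zero, sub_zero]
      have hQP : Qᴴ * ((1 : Matrix (Fin n) (Fin n) ℂ) - (n:ℂ)⁻¹ • JC n) = Qᴴ := by
        rw [Matrix.mul_sub, Matrix.mul_one, Matrix.mul_smul, QH_mul_J Q hQ2,
          smul_zero, sub_zero]
      have hPC0 : ((1 : Matrix (Fin n) (Fin n) ℂ) - (n:ℂ)⁻¹ • JC n) * SC A *
          ((1 : Matrix (Fin n) (Fin n) ℂ) - (n:ℂ)⁻¹ • JC n) = 0 := by
        rw [PC_eq_map, SC_eq_map, map_mul_map, map_mul_map, h]
        ext i j; simp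
      have key : Qᴴ * (((1 : Matrix (Fin n) (Fin n) ℂ) - (n:ℂ)⁻¹ • JC n) * SC A *
          ((1 : Matrix (Fin n) (Fin n) ℂ) - (n:ℂ)⁻¹ • JC n)) * Q = Qᴴ * SC A * Q := by
        calc Qᴴ * (((1 : Matrix (Fin n) (Fin n) ℂ) - (n:ℂ)⁻¹ • JC n) * SC A *
              ((1 : Matrix (Fin n) (Fin n) ℂ) - (n:ℂ)⁻¹ • JC n)) * Q
            = (Qᴴ * ((1 : Matrix (Fin n) (Fin n) ℂ) - (n:ℂ)⁻¹ • JC n)) * SC A *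
              (((1 : Matrix (Fin n) (Fin n) ℂ) - (n:ℂ)⁻¹ • JC n) * Q) := by
              simp only [Matrix.mul_assoc]
          _ = Qᴴ * SC A * Q := by rw [hQP, hPQ]
      rw [← key, hPC0, Matrix.mul_zero, Matrix.zero_mul]
  -- entrywise combination identity
  have hcomb : ∀ i j : Fin n, SR A i j - SR A i k - SR A k j + SR A k k
      = (((lap A) *ᵥ (Pi.single i 1 - Pi.single k 1) ⬝ᵥ
            (lap A) *ᵥ (Pi.single j 1 - Pi.single k 1)) -
          ((lap A)ᵀ *ᵥ (Pi.single i 1 - Pi.single k 1) ⬝ᵥ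
            (lap A)ᵀ *ᵥ (Pi.single j 1 - Pi.single k 1)))
        - (n:ℝ)⁻¹ * ((imb A i - imb A k) * (imb A j - imb A k)) := by
    intro i j
    rw [mulVec_dot, mulVec_dot, Matrix.transpose_transpose, dot_single_sub,
      dot_single_sub]
    have h3 := dot_single_sub (vecMulVec (imb A) (imb A)) i j k
    simp only [Matrix.vecMulVec_apply] at h3
    simp only [SR, Matrix.sub_apply, Matrix.smul_apply, Matrix.vecMulVec_apply,
      smul_eq_mul]
    ring
  have hPS_iff := PMP_zero_iff hn (SR A) k
  constructor
  · rintro ⟨hNM, hNL⟩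
    have hPSP : PR n * SR A * PR n = 0 := hQS.mp (hM.mp hNM)
    have hcomb0 := hPS_iff.mp hPSP
    constructor
    · -- not balanced
      intro hBal
      apply hNL
      have hi0 : ∀ i, imb A i = 0 := fun i => sub_eq_zero.mpr (hBal i)
      have hSR : SR A = (lap A)ᵀ * lap A - lap A * (lap A)ᵀ := by
        rw [SR]
        have : vecMulVec (imb A) (imb A) = 0 := by
          ext a b; simp [Matrix.vecMulVec_apply, hi0]
        rw [this, smul_zero, sub_zero]
      have hrow : ∀ a, ∑ d, SR A a d = 0 := by
        intro a
        rw [hSR]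
        simp only [Matrix.sub_apply, Matrix.mul_apply, Matrix.transpose_apply,
          Finset.sum_sub_distrib]
        have r1 : ∑ d : Fin n, ∑ c : Fin n, lap A c a * lap A c d = 0 := by
          rw [Finset.sum_comm]
          apply Finset.sum_eq_zero
          intro c _
          rw [← Finset.mul_sum, lap_row_sum, mul_zero]
        have r2 : ∑ d : Fin n, ∑ c : Fin n, lap A a c * lap A d c = 0 := by
          rw [Finset.sum_comm]
          apply Finset.sum_eq_zero
          intro c _
          rw [← Finset.mul_sum]
          have : ∑ d, lap A d c = 0 := by rw [lap_col_sum, hi0]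
          rw [this, mul_zero]
        rw [r1, r2, sub_zero]
      have hcol : ∀ b, ∑ c, SR A c b = 0 := by
        intro b
        rw [hSR]
        simp only [Matrix.sub_apply, Matrix.mul_apply, Matrix.transpose_apply,
          Finset.sum_sub_distrib]
        have r1 : ∑ c : Fin n, ∑ e : Fin n, lap A e c * lap A e b = 0 := by
          rw [Finset.sum_comm]
          apply Finset.sum_eq_zero
          intro e _
          rw [← Finset.sum_mul]
          have : ∑ c, lap A e c = 0 := lap_row_sum A e
          rw [this, zero_mul]
        have r2 : ∑ c : Fin n, ∑ e : Fin n, lap A c e * lap A b e = 0 := by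
          rw [Finset.sum_comm]
          apply Finset.sum_eq_zero
          intro e _
          rw [← Finset.sum_mul]
          have : ∑ c, lap A c e = 0 := by rw [lap_col_sum, hi0]
          rw [this, zero_mul]
        rw [r1, r2, sub_zero]
      have hSzero : SR A = 0 := by
        ext a b
        have := congrFun (congrFun hPSP a) b
        rw [PMP_apply, hrow a, hcol b] at this
        have hall : ∑ c, ∑ d, SR A c d = 0 := Finset.sum_eq_zero fun c _ => hrow c
        rw [hall] at this
        simpa using this
      rw [hSR] at hSzero
      exact sub_eq_zero.mp hSzero
    · -- the identity
      intro i j hi hj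
      have h0 := hcomb0 i j
      rw [hcomb i j] at h0
      field_simp at h0 ⊢
      linarith [h0]
  · rintro ⟨hb, hid⟩
    have hcomb0 : ∀ i j, SR A i j - SR A i k - SR A k j + SR A k k = 0 := by
      intro i j
      by_cases hi : i = k
      · subst hi; ring
      by_cases hj : j = k
      · subst hj; ring
      rw [hcomb i j]
      have := hid i j hi hj
      field_simp
      linarith [this]
    have hPSP := hPS_iff.mpr hcomb0
    refine ⟨hM.mpr (hQS.mpr hPSP), ?_⟩
    intro hNL
    apply hb
    have hconst : ∀ i, imb A i = imb A k := by
      intro i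
      by_cases hi : i = k
      · rw [hi]
      have hdots : ((lap A) *ᵥ (Pi.single i 1 - Pi.single k 1) ⬝ᵥ
            (lap A) *ᵥ (Pi.single i 1 - Pi.single k 1)) -
          ((lap A)ᵀ *ᵥ (Pi.single i 1 - Pi.single k 1) ⬝ᵥ
            (lap A)ᵀ *ᵥ (Pi.single i 1 - Pi.single k 1)) = 0 := by
        rw [mulVec_dot, mulVec_dot, Matrix.transpose_transpose, hNL, sub_self]
      have := hid i i hi hi
      rw [hdots, mul_zero] at this
      have : (imb A i - imb A k) ^ 2 = 0 := by nlinarith [this]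
      have := pow_eq_zero_iff (n := 2) (by norm_num) |>.mp this
      linarith
    have hks : imb A k = 0 := by
      have hsum : ∑ i, imb A i = 0 := sum_imb A
      rw [Finset.sum_congr rfl (fun i _ => hconst i), Finset.sum_const,
        Finset.card_univ] at hsum
      simpa [hn] using hsum
    intro i
    have : imb A i = 0 := by rw [hconst i, hks]
    have := sub_eq_zero.mp this
    exact this

end RNAux

/-- For any fixed vertex `k`, `Γ` is restricted-normal iff `Γ` is not
balanced and for all `i, j ≠ k`:
`(ι(i) - ι(k))(ι(j) - ι(k)) = n(⟨L(e_i - e_k), L(e_j - e_k)⟩ - ⟨Lᵀ(e_i - e_k), Lᵀ(e_j - e_k)⟩)`. -/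
theorem restricted_normal_iff_imbalance_identity {n : ℕ}
    (A : Matrix (Fin n) (Fin n) ℝ) (hA : IsAdj A)
    (Q : Matrix (Fin n) (Fin (n - 1)) ℂ) (hQ : IsRestrictor Q) (k : Fin n) :
    (IsNormalM (Qᴴ * lapC A * Q) ∧ ¬ IsNormalM (lap A)) ↔
      (¬ Bal A ∧ ∀ i j, i ≠ k → j ≠ k →
        (imb A i - imb A k) * (imb A j - imb A k) =
          (n : ℝ) *
            (((lap A) *ᵥ (Pi.single i 1 - Pi.single k 1) ⬝ᵥ
                (lap A) *ᵥ (Pi.single j 1 - Pi.single k 1)) -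
              ((lap A)ᵀ *ᵥ (Pi.single i 1 - Pi.single k 1) ⬝ᵥ
                (lap A)ᵀ *ᵥ (Pi.single j 1 - Pi.single k 1)))) := by
  obtain ⟨hQ1, hQ2⟩ := hQ
  have hNL_iff : IsNormalM (lap A) ↔ (lap A)ᵀ * lap A = lap A * (lap A)ᵀ := by
    unfold IsNormalM
    have hst : star (lap A) = (lap A)ᵀ := by
      ext i j
      simp [Matrix.star_apply]
    rw [hst]
  have hNM_iff : IsNormalM (Qᴴ * lapC A * Q) ↔
      ((Qᴴ * lapC A * Q)ᴴ * (Qᴴ * lapC A * Q)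
        = (Qᴴ * lapC A * Q) * (Qᴴ * lapC A * Q)ᴴ) := by
    unfold IsNormalM
    rw [Matrix.star_eq_conjTranspose]
  have hBal_iff : Bal A ↔ ∀ i, ∑ j, A i j = ∑ j, A j i := Iff.rfl
  rw [hNM_iff, hNL_iff, not_iff_not.mpr hBal_iff]
  exact RNAux.main A Q hQ1 hQ2 k
end

section
/- Let Γ be a digraph of order n with vertex set V, adjacency matrix A, and Laplacian L, where n is square-free or n = 2m with m square-free. If Γ is restricted-normal (i.e., QᴴLQ is normal for a restrictor matrix Q of order n and L is not normal), then Γ is a directed join of two normal digraphs: there exists a set S ⊆ V with S ≠ ∅ and S ≠ V such that A i j = 1 and A j i = 0 for all i ∈ S and j ∉ S, and the Laplacians of the induced subdigraphs on S and on V∖S are normal matrices. -/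
open Matrix

lemma restrictor_right {n : ℕ} (hn : 1 ≤ n) (Q : Matrix (Fin n) (Fin (n-1)) ℂ)
    (hQ : IsRestrictor Q) :
    Q * Qᴴ = 1 - ((n:ℂ))⁻¹ • (Matrix.of fun _ _ => (1:ℂ)) := by
  obtain ⟨h1, h2⟩ := hQ
  have hnR : (0:ℝ) < (n:ℝ) := by exact_mod_cast hn
  have hnC : (n:ℂ) ≠ 0 := by exact_mod_cast hnR.ne'
  set c : ℂ := (((Real.sqrt n)⁻¹ : ℝ) : ℂ) with hc
  have hstarc : (starRingEnd ℂ) c = c := Complex.conj_ofReal _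
  have hcc : (starRingEnd ℂ) c * c = (n : ℂ)⁻¹ := by
    rw [hstarc, hc, ← Complex.ofReal_mul, ← mul_inv, Real.mul_self_sqrt hnR.le,
      Complex.ofReal_inv, Complex.ofReal_natCast]
  set V : Matrix (Fin n) (Fin (n-1) ⊕ Fin 1) ℂ :=
    Matrix.of (fun i => Sum.elim (fun k => Q i k) (fun _ => c)) with hV
  have colsum : ∀ k, ∑ i, (starRingEnd ℂ) (Q i k) = 0 := by
    intro k
    have := congrFun h2 k
    simpa [Matrix.mulVec, dotProduct] using this
  have hVV : Vᴴ * V = 1 := by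
    ext a b
    rcases a with k | u <;> rcases b with l | u'
    · have := congrFun (congrFun h1 k) l
      simpa [Matrix.mul_apply, Matrix.one_apply, hV] using this
    · simp only [Matrix.mul_apply, hV, Matrix.conjTranspose_apply, Matrix.of_apply,
        Sum.elim_inl, Sum.elim_inr]
      rw [← Finset.sum_mul]
      simp [colsum k, Matrix.one_apply]
    · simp only [Matrix.mul_apply, hV, Matrix.conjTranspose_apply, Matrix.of_apply,
        Sum.elim_inl, Sum.elim_inr]
      rw [← Finset.mul_sum]
      have h3 : ∑ i, Q i l = 0 := by
        have := congrArg (starRingEnd ℂ) (colsum l)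
        simpa using this
      simp [h3, Matrix.one_apply]
    · simp only [Matrix.mul_apply, hV, Matrix.conjTranspose_apply, Matrix.of_apply,
        Sum.elim_inr]
      simp only [Finset.sum_const, Finset.card_univ, Fintype.card_fin, nsmul_eq_mul]
      have hcc2 : star c * c = (n : ℂ)⁻¹ := hcc
      rw [hcc2, mul_inv_cancel₀ hnC]
      simp [Matrix.one_apply, Subsingleton.elim u u']
  have hcard : n - 1 + 1 = n := by omega
  let e : (Fin (n-1) ⊕ Fin 1) ≃ Fin n := finSumFinEquiv.trans (finCongr hcard)
  set W : Matrix (Fin n) (Fin n) ℂ := V.submatrix id e.symm with hW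
  have hWW : Wᴴ * W = 1 := by
    rw [hW, Matrix.conjTranspose_submatrix]
    rw [show (Vᴴ.submatrix (e.symm : Fin n → (Fin (n-1) ⊕ Fin 1)) (id : Fin n → Fin n))
        = Vᴴ.submatrix e.symm (Equiv.refl (Fin n)) from rfl]
    rw [show (V.submatrix (id : Fin n → Fin n) (e.symm : Fin n → (Fin (n-1) ⊕ Fin 1)))
        = V.submatrix (Equiv.refl (Fin n)) e.symm from rfl]
    rw [Matrix.submatrix_mul_equiv Vᴴ V _ _ _, hVV, Matrix.submatrix_one_equiv]
  have hWW2 : W * Wᴴ = 1 := mul_eq_one_comm.mp hWW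
  have hVW : V * Vᴴ = W * Wᴴ := by
    ext i j
    rw [hW, Matrix.mul_apply, Matrix.mul_apply]
    rw [← Equiv.sum_comp e.symm (fun a => V i a * Vᴴ a j)]
    rfl
  have hVV2 : Q * Qᴴ + (n:ℂ)⁻¹ • (Matrix.of fun _ _ => (1:ℂ)) = 1 := by
    rw [← hWW2, ← hVW]
    ext i j
    simp only [Matrix.add_apply, Matrix.mul_apply, Matrix.smul_apply, Matrix.of_apply,
      Matrix.conjTranspose_apply, hV, Fintype.sum_sum_type]
    simp only [Sum.elim_inl, Sum.elim_inr, Matrix.of_apply]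
    have h4 : c * (starRingEnd ℂ) c = (n:ℂ)⁻¹ := by rw [mul_comm]; exact hcc
    simp [h4, smul_eq_mul, mul_one]
  rw [← hVV2, add_sub_cancel_right]


lemma nt_lemma {n : ℕ} (hn2 : 2 ≤ n)
    (hn : Squarefree n ∨ ∃ m, n = 2 * m ∧ Squarefree m)
    (a b C : ℤ) (hC : 2*(n:ℤ)*C = n*(a+b) + (a-b)^2)
    (ha : |a| ≤ (n:ℤ)-1) (hb : |b| ≤ (n:ℤ)-1) :
    a - b = 0 ∨ a - b = n ∨ a - b = -n := by
  set d : ℤ := a - b with hd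
  obtain ⟨ha1, ha2⟩ := abs_le.mp ha
  obtain ⟨hb1, hb2⟩ := abs_le.mp hb
  have hdb : |d| ≤ 2*(n:ℤ) - 2 := abs_le.mpr ⟨by omega, by omega⟩
  have hdvd : (n:ℤ) ∣ d^2 := ⟨2*C - (a+b), by linarith⟩
  have keyfin : ∀ t : ℤ, d = (n:ℤ) * t → (a - b = 0 ∨ a - b = n ∨ a - b = -n) := by
    intro t ht
    have hnz : (0:ℤ) < (n:ℤ) := by exact_mod_cast (by omega : 0 < n)
    have h1 : |t| ≤ 1 := by
      by_contra h
      push_neg at h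
      have h2t : 2 ≤ |t| := h
      have : 2*(n:ℤ) ≤ |d| := by
        rw [ht, abs_mul, abs_of_pos hnz]
        nlinarith [abs_nonneg t]
      linarith
    obtain ⟨hl, hr⟩ := abs_le.mp h1
    interval_cases t
    · right; right; rw [hd] at ht; omega
    · left; rw [hd] at ht; omega
    · right; left; rw [hd] at ht; omega
  rcases hn with hsf | ⟨m, rfl, hsf⟩
  · have h2 : Squarefree (n:ℤ) := Int.squarefree_natCast.mpr hsf
    obtain ⟨t, ht⟩ := (h2.dvd_pow_iff_dvd two_ne_zero).mp hdvd
    exact keyfin t ht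
  · have hm0 : m ≠ 0 := hsf.ne_zero
    have hmz : (0:ℤ) < (m:ℤ) := by exact_mod_cast Nat.pos_of_ne_zero hm0
    obtain ⟨k, hk⟩ := hdvd   -- d^2 = (2m) * k
    push_cast at hk hC
    have hmdvd : (m:ℤ) ∣ d^2 := ⟨2*k, by linarith⟩
    have h2 : Squarefree (m:ℤ) := Int.squarefree_natCast.mpr hsf
    obtain ⟨t, ht⟩ := (h2.dvd_pow_iff_dvd two_ne_zero).mp hmdvd
    have hmt : (m:ℤ) * t^2 = 2 * k := by
      have h5 : (m:ℤ) * ((m:ℤ)*t^2) = (m:ℤ) * (2*k) :=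
        calc (m:ℤ)*((m:ℤ)*t^2) = ((m:ℤ)*t)^2 := by ring
        _ = d^2 := by rw [ht]
        _ = 2*(m:ℤ)*k := hk
        _ = (m:ℤ)*(2*k) := by ring
      exact mul_left_cancel₀ hmz.ne' h5
    have h2C : 2*C = (a+b) + k := by
      have h6 : (2*(m:ℤ)) * (2*C) = (2*(m:ℤ)) * ((a+b)+k) := by linear_combination hC + hk
      exact mul_left_cancel₀ (by positivity) h6
    have hteven : Even t := by
      rcases Int.even_or_odd m with hme | hmo
      · -- m even, m = 2m', m' odd
        obtain ⟨m', hm'⟩ : (2:ℤ) ∣ (m:ℤ) := hme.two_dvd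
        have hm'odd : Odd m' := by
          rcases Int.even_or_odd m' with hme' | hmo'
          · exfalso
            obtain ⟨m'', hm''⟩ := hme'
            have h7 : ((2*2 : ℕ):ℤ) ∣ ((m:ℕ):ℤ) := ⟨m'', by push_cast; omega⟩
            have := Int.ofNat_dvd.mp h7
            exact (Nat.squarefree_iff_prime_squarefree.mp hsf 2 Nat.prime_two)
              (by simpa using this)
          · exact hmo'
        have hkeq : k = m' * t^2 := by
          have := hmt; rw [hm'] at this; linarith
        have hdeven : Even d := ⟨m'*t, by rw [ht, hm']; ring⟩
        obtain ⟨r, hr⟩ := hdeven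
        have hkeven : Even k := ⟨C - r - b, by omega⟩
        rw [hkeq] at hkeven
        rcases Int.even_mul.mp hkeven with h | h
        · exact absurd h (Int.not_even_iff_odd.mpr hm'odd)
        · exact (Int.even_pow.mp h).1
      · -- m odd : m*t^2 = 2k even forces t even
        rcases Int.even_or_odd t with h | h
        · exact h
        · exfalso
          have hodd : Odd ((m:ℤ) * t^2) := hmo.mul (h.pow)
          rw [hmt] at hodd
          obtain ⟨j, hj⟩ := hodd
          omega
    obtain ⟨r, hr⟩ := hteven
    exact keyfin r (by rw [ht, hr]; push_cast; ring)


set_option maxHeartbeats 1000000 in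
theorem core {n : ℕ} (hn2 : 2 ≤ n)
    (A : Matrix (Fin n) (Fin n) ℝ) (hA : IsAdj A)
    (Q : Matrix (Fin n) (Fin (n - 1)) ℂ) (hQ : IsRestrictor Q)
    (hrn : IsNormalM (Qᴴ * lapC A * Q)) :
    ∃ (AZ : Matrix (Fin n) (Fin n) ℤ),
      (∀ i j, A i j = (AZ i j : ℝ)) ∧ (∀ i j, AZ i j = 0 ∨ AZ i j = 1) ∧ (∀ i, AZ i i = 0) ∧
      (∀ i j, lap A i j = (((Matrix.diagonal (fun i => ∑ j, AZ i j) - AZ) i j : ℤ) : ℝ)) ∧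
      (∀ i j, 2 * (n:ℤ) * ((Matrix.diagonal (fun i => ∑ j, AZ i j) - AZ) * (Matrix.diagonal (fun i => ∑ j, AZ i j) - AZ)ᵀ - (Matrix.diagonal (fun i => ∑ j, AZ i j) - AZ)ᵀ * (Matrix.diagonal (fun i => ∑ j, AZ i j) - AZ)) i j
        = (n:ℤ) * ((∑ k, AZ i k - ∑ k, AZ k i) + (∑ k, AZ j k - ∑ k, AZ k j))
          + ((∑ k, AZ i k - ∑ k, AZ k i) - (∑ k, AZ j k - ∑ k, AZ k j))^2) := by
  classical
  set AZ : Matrix (Fin n) (Fin n) ℤ := Matrix.of fun i j => if A i j = 1 then 1 else 0 with hAZ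
  have hAcast : ∀ i j, A i j = (AZ i j : ℝ) := by
    intro i j
    rcases hA.1 i j with h | h <;> simp [hAZ, h]
  have hAZ01 : ∀ i j, AZ i j = 0 ∨ AZ i j = 1 := by
    intro i j; rcases hA.1 i j with h | h <;> simp [hAZ, h]
  have hAZdiag : ∀ i, AZ i i = 0 := by
    intro i
    have := hA.2 i
    have h1 := hA.1 i i
    simp [hAZ, this]
  set LZ : Matrix (Fin n) (Fin n) ℤ := Matrix.diagonal (fun i => ∑ j, AZ i j) - AZ with hLZ
  set z : Fin n → ℤ := fun i => (∑ j, AZ i j) - (∑ j, AZ j i) with hz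
  set CZ : Matrix (Fin n) (Fin n) ℤ := LZ * LZᵀ - LZᵀ * LZ with hCZ
  set w : Fin n → ℤ := fun i => ∑ k, LZ i k * z k with hw
  -- basic sums
  have rowsumLZ : ∀ i, ∑ j, LZ i j = 0 := by
    intro i
    simp [hLZ, Matrix.sub_apply, Finset.sum_sub_distrib, Matrix.diagonal_apply,
      Finset.sum_ite_eq]
  have colsumLZ : ∀ j, ∑ i, LZ i j = z j := by
    intro j
    have hdiag : ∑ i, (Matrix.diagonal (fun i => ∑ j, AZ i j)) i j = ∑ k, AZ j k :=
 by
      rw [Finset.sum_eq_single j (fun b _ hb => Matrix.diagonal_apply_ne _ hb)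
        (fun h => absurd (Finset.mem_univ j) h)]
      simp
    simp only [hLZ, Matrix.sub_apply, Finset.sum_sub_distrib, hz, hdiag]
  have sumz : ∑ i, z i = 0 := by
    have : ∑ j, ∑ i, LZ i j = ∑ i, ∑ j, LZ i j := Finset.sum_comm
    simp only [rowsumLZ, colsumLZ, Finset.sum_const_zero] at this
    exact this
  -- complexified Laplacian entries
  have hlapcast : ∀ i j, lap A i j = ((LZ i j : ℝ)) := by
    intro i j
    by_cases h : i = j
    · subst h
      simp only [lap, hLZ, Matrix.sub_apply, Matrix.diagonal_apply_eq]
      push_cast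
      simp [hAcast]
    · simp only [lap, hLZ, Matrix.sub_apply, Matrix.diagonal_apply_ne _ h]
      push_cast
      simp [hAcast]
  set Lc : Matrix (Fin n) (Fin n) ℂ := lapC A with hLcdef
  have hLcE : ∀ i j, Lc i j = ((LZ i j : ℂ)) := by
    intro i j
    simp only [hLcdef, lapC, Matrix.map_apply, hlapcast]
    push_cast
    rfl
  have hstarLcE : ∀ i j, Lcᴴ i j = ((LZ j i : ℂ)) := by
    intro i j
    simp only [Matrix.conjTranspose_apply, hLcE]
    exact star_intCast _
  have hnC : (n:ℂ) ≠ 0 := by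
    simp only [ne_eq, Nat.cast_eq_zero]
    omega
  set Jc : Matrix (Fin n) (Fin n) ℂ := Matrix.of (fun _ _ => (1:ℂ)) with hJc
  have hP : Q * Qᴴ = 1 - (n:ℂ)⁻¹ • Jc := restrictor_right (by omega) Q hQ
  have hrowsC : ∀ i, ∑ k, ((LZ i k : ℤ) : ℂ) = 0 := by
    intro i
    have : ((∑ k, LZ i k : ℤ) : ℂ) = ((0:ℤ):ℂ) := by rw [rowsumLZ]
    push_cast at this
    simpa using this
  have hcolsC : ∀ j, ∑ k, ((LZ k j : ℤ) : ℂ) = ((z j : ℤ) : ℂ) := by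
    intro j
    have : ((∑ k, LZ k j : ℤ) : ℂ) = ((z j:ℤ):ℂ) := by rw [colsumLZ]
    push_cast at this ⊢
    exact this
  -- products
  have hJ2 : Lc * Jc * Lcᴴ = 0 := by
    have hLcJ : Lc * Jc = 0 := by
      ext i j
      simp only [Matrix.mul_apply, hJc, Matrix.of_apply, mul_one, hLcE, Matrix.zero_apply]
      exact hrowsC i
    rw [hLcJ, Matrix.zero_mul]
  have hJ1 : Lcᴴ * Jc * Lc = Matrix.of (fun i j => ((z i : ℂ)) * ((z j : ℂ))) := by
    have h1 : Lcᴴ * Jc = Matrix.of (fun i _ => ((z i : ℂ))) := by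
      ext i l
      simp only [Matrix.mul_apply, hJc, Matrix.of_apply, mul_one, hstarLcE]
      exact hcolsC i
    rw [h1]
    ext i j
    simp only [Matrix.mul_apply, Matrix.of_apply, hLcE]
    rw [← Finset.mul_sum, hcolsC]
  set DZ : Matrix (Fin n) (Fin n) ℤ := LZᵀ * LZ - LZ * LZᵀ with hDZ
  have hL12 : Lcᴴ * Lc - Lc * Lcᴴ = DZ.map (fun x : ℤ => (x:ℂ)) := by
    ext i j
    simp only [Matrix.sub_apply, Matrix.mul_apply, Matrix.map_apply, hDZ,
      Matrix.transpose_apply, hLcE, hstarLcE]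
    push_cast
    rfl
  -- expansion helper
  have expand : ∀ X Y : Matrix (Fin n) (Fin n) ℂ,
      (Qᴴ * X * Q) * (Qᴴ * Y * Q)
        = Qᴴ * (X * Y) * Q - (n:ℂ)⁻¹ • (Qᴴ * (X * Jc * Y) * Q) := by
    intro X Y
    have h1 : (Qᴴ * X * Q) * (Qᴴ * Y * Q) = Qᴴ * X * (Q * Qᴴ) * Y * Q := by
      simp only [Matrix.mul_assoc]
    rw [h1, hP]
    simp only [Matrix.mul_sub, Matrix.sub_mul, Matrix.mul_one, Matrix.mul_smul,
      Matrix.smul_mul, Matrix.mul_assoc]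
  -- the key equation
  set Nc : Matrix (Fin n) (Fin n) ℂ :=
    DZ.map (fun x : ℤ => (x:ℂ)) - (n:ℂ)⁻¹ • Matrix.of (fun i j => ((z i : ℂ)) * ((z j : ℂ))) with hNc
  have hQNQ : Qᴴ * Nc * Q = 0 := by
    have hstarM : star (Qᴴ * Lc * Q) = Qᴴ * Lcᴴ * Q := by
      simp only [Matrix.star_eq_conjTranspose, Matrix.conjTranspose_mul,
        Matrix.conjTranspose_conjTranspose, Matrix.mul_assoc]
    have hrn2 : (Qᴴ * Lcᴴ * Q) * (Qᴴ * Lc * Q) = (Qᴴ * Lc * Q) * (Qᴴ * Lcᴴ * Q) := by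
      have := hrn
      unfold IsNormalM at this
      rw [hstarM] at this
      exact this
    rw [expand Lcᴴ Lc, expand Lc Lcᴴ, hJ1, hJ2, Matrix.mul_zero, Matrix.zero_mul,
      smul_zero, sub_zero] at hrn2
    have : Qᴴ * (Lcᴴ * Lc) * Q - Qᴴ * (Lc * Lcᴴ) * Q
        - (n:ℂ)⁻¹ • (Qᴴ * Matrix.of (fun i j => ((z i : ℂ)) * ((z j : ℂ))) * Q) = 0 := by
      rw [sub_sub, ← hrn2]
      abel
    rw [hNc]
    calc Qᴴ * (DZ.map (fun x : ℤ => (x:ℂ))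
          - (n:ℂ)⁻¹ • Matrix.of (fun i j => ((z i : ℂ)) * ((z j : ℂ)))) * Q
        = Qᴴ * (Lcᴴ * Lc - Lc * Lcᴴ) * Q
          - (n:ℂ)⁻¹ • (Qᴴ * Matrix.of (fun i j => ((z i : ℂ)) * ((z j : ℂ))) * Q) := by
          rw [hL12]
          simp only [Matrix.mul_sub, Matrix.sub_mul, Matrix.mul_smul, Matrix.smul_mul]
      _ = 0 := by
          rw [Matrix.mul_sub, Matrix.sub_mul]
          exact this
  have hPNP : (1 - (n:ℂ)⁻¹ • Jc) * Nc * (1 - (n:ℂ)⁻¹ • Jc) = 0 := by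
    rw [← hP]
    calc Q * Qᴴ * Nc * (Q * Qᴴ) = Q * (Qᴴ * Nc * Q) * Qᴴ := by
          simp only [Matrix.mul_assoc]
      _ = 0 := by rw [hQNQ, Matrix.mul_zero, Matrix.zero_mul]
  -- integer sum facts about CZ
  have hDC : DZ = -CZ := by rw [hDZ, hCZ, neg_sub]
  have rowCZ : ∀ i, ∑ k, CZ i k = w i := by
    intro i
    have h1 : ∑ k, (LZ * LZᵀ) i k = w i := by
      simp only [Matrix.mul_apply, Matrix.transpose_apply]
      rw [Finset.sum_comm]
      refine Finset.sum_congr rfl (fun m _ => ?_)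
      rw [← Finset.mul_sum, colsumLZ]
    have h2 : ∑ k, (LZᵀ * LZ) i k = 0 := by
      simp only [Matrix.mul_apply, Matrix.transpose_apply]
      rw [Finset.sum_comm]
      refine Finset.sum_eq_zero (fun m _ => ?_)
      rw [← Finset.mul_sum, rowsumLZ, mul_zero]
    simp only [hCZ, Matrix.sub_apply, Finset.sum_sub_distrib, h1, h2, sub_zero]
  have colCZ : ∀ j, ∑ k, CZ k j = w j := by
    intro j
    have h1 : ∑ k, (LZ * LZᵀ) k j = w j := by
      simp only [Matrix.mul_apply, Matrix.transpose_apply]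
      rw [Finset.sum_comm]
      simp only [hw]
      refine Finset.sum_congr rfl (fun m _ => ?_)
      rw [← Finset.sum_mul, colsumLZ, mul_comm]
    have h2 : ∑ k, (LZᵀ * LZ) k j = 0 := by
      simp only [Matrix.mul_apply, Matrix.transpose_apply]
      rw [Finset.sum_comm]
      refine Finset.sum_eq_zero (fun m _ => ?_)
      rw [← Finset.sum_mul, rowsumLZ, zero_mul]
    simp only [hCZ, Matrix.sub_apply, Finset.sum_sub_distrib, h1, h2, sub_zero]
  set S2 : ℤ := ∑ k, z k * z k with hS2
  have sumw : ∑ j, w j = S2 := by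
    simp only [hw, hS2]
    rw [Finset.sum_comm]
    refine Finset.sum_congr rfl (fun k _ => ?_)
    rw [← Finset.sum_mul, colsumLZ]
  -- complex casts of these
  have hsumzC : ∑ k, ((z k : ℤ):ℂ) = 0 := by
    have : ((∑ k, z k : ℤ):ℂ) = ((0:ℤ):ℂ) := by rw [sumz]
    push_cast at this
    simpa using this
  have hNcsumcol : ∀ j, ∑ k, Nc k j = -((w j : ℤ):ℂ) := by
    intro j
    simp only [hNc, Matrix.sub_apply, Matrix.map_apply, Matrix.smul_apply,
      Matrix.of_apply, smul_eq_mul, Finset.sum_sub_distrib]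
    have h1 : ∑ k, ((DZ k j : ℤ):ℂ) = -((w j:ℤ):ℂ) := by
      have : (∑ k, DZ k j) = -(w j) := by
        have : ∑ k, DZ k j = ∑ k, -(CZ k j) := by
          refine Finset.sum_congr rfl (fun k _ => ?_)
          rw [hDC]; rfl
        rw [this, Finset.sum_neg_distrib, colCZ]
      calc ∑ k, ((DZ k j : ℤ):ℂ) = ((∑ k, DZ k j : ℤ) : ℂ) := by push_cast; rfl
      _ = ((-(w j) : ℤ) : ℂ) := by rw [this]
      _ = -((w j:ℤ):ℂ) := by push_cast; rfl
    have h2 : ∑ k, (n:ℂ)⁻¹ * (((z k:ℤ):ℂ)) * ((z j:ℤ):ℂ) = 0 := by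
      rw [← Finset.sum_mul, ← Finset.mul_sum, hsumzC, mul_zero, zero_mul]
    rw [h1]
    have h3 : ∑ k, (n:ℂ)⁻¹ * (((z k:ℤ):ℂ) * ((z j:ℤ):ℂ)) = 0 := by
      rw [← h2]
      exact Finset.sum_congr rfl (fun k _ => by ring)
    rw [h3, sub_zero]
  have hNcsumrow : ∀ i, ∑ k, Nc i k = -((w i : ℤ):ℂ) := by
    intro i
    simp only [hNc, Matrix.sub_apply, Matrix.map_apply, Matrix.smul_apply,
      Matrix.of_apply, smul_eq_mul, Finset.sum_sub_distrib]
    have h1 : ∑ k, ((DZ i k : ℤ):ℂ) = -((w i:ℤ):ℂ) := by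
      have heq : (∑ k, DZ i k) = -(w i) := by
        have : ∑ k, DZ i k = ∑ k, -(CZ i k) := by
          refine Finset.sum_congr rfl (fun k _ => ?_)
          rw [hDC]; rfl
        rw [this, Finset.sum_neg_distrib, rowCZ]
      calc ∑ k, ((DZ i k : ℤ):ℂ) = ((∑ k, DZ i k : ℤ) : ℂ) := by push_cast; rfl
      _ = ((-(w i) : ℤ) : ℂ) := by rw [heq]
      _ = -((w i:ℤ):ℂ) := by push_cast; rfl
    have h3 : ∑ k, (n:ℂ)⁻¹ * (((z i:ℤ):ℂ) * ((z k:ℤ):ℂ)) = 0 := by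
      have : ∑ k, (n:ℂ)⁻¹ * (((z i:ℤ):ℂ) * ((z k:ℤ):ℂ))
          = ((n:ℂ)⁻¹ * ((z i:ℤ):ℂ)) * ∑ k, ((z k:ℤ):ℂ) := by
        rw [Finset.mul_sum]
        exact Finset.sum_congr rfl (fun k _ => by ring)
      rw [this, hsumzC, mul_zero]
    rw [h1, h3, sub_zero]
  have hNctot : ∑ l, ∑ k, Nc k l = -((S2 : ℤ):ℂ) := by
    have : ∑ l, ∑ k, Nc k l = ∑ l, -((w l:ℤ):ℂ) :=
      Finset.sum_congr rfl (fun l _ => hNcsumcol l)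
    rw [this, Finset.sum_neg_distrib]
    congr 1
    calc ∑ l, ((w l:ℤ):ℂ) = ((∑ l, w l : ℤ):ℂ) := by push_cast; rfl
    _ = ((S2:ℤ):ℂ) := by rw [sumw]
  -- expansion of hPNP
  have hexp : Nc - ((n:ℂ)⁻¹ • Jc) * Nc
      - (Nc * ((n:ℂ)⁻¹ • Jc) - ((n:ℂ)⁻¹ • Jc) * Nc * ((n:ℂ)⁻¹ • Jc)) = 0 := by
    have hexp0 : (1 - (n:ℂ)⁻¹ • Jc) * Nc * (1 - (n:ℂ)⁻¹ • Jc)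
        = Nc - ((n:ℂ)⁻¹ • Jc) * Nc
          - (Nc * ((n:ℂ)⁻¹ • Jc) - ((n:ℂ)⁻¹ • Jc) * Nc * ((n:ℂ)⁻¹ • Jc)) := by
      rw [Matrix.sub_mul, Matrix.one_mul, Matrix.mul_sub, Matrix.mul_one, Matrix.sub_mul]
    rw [← hexp0]
    exact hPNP
  have EZ : ∀ i j, (n:ℤ)^2 * CZ i j + n * (z i * z j) - n * w j - n * w i + S2 = 0 := by
    intro i j
    have h := congrFun (congrFun hexp i) j
    have hJNe : (((n:ℂ)⁻¹ • Jc) * Nc) i j = (n:ℂ)⁻¹ * (∑ k, Nc k j) := by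
      simp [Matrix.smul_mul, Matrix.mul_apply, hJc, Finset.mul_sum]
    have hNJe : (Nc * ((n:ℂ)⁻¹ • Jc)) i j = (n:ℂ)⁻¹ * (∑ k, Nc i k) := by
      simp only [Matrix.mul_smul, Matrix.smul_apply, smul_eq_mul, Matrix.mul_apply,
        hJc, Matrix.of_apply, mul_one]
      rw [← Finset.sum_mul, mul_comm]
    have hJNJ0 : (Jc * Nc * Jc) i j = ∑ l, ∑ k, Nc k l := by
      simp only [Matrix.mul_apply, hJc, Matrix.of_apply, one_mul, mul_one]
    have hJNJe : (((n:ℂ)⁻¹ • Jc) * Nc * ((n:ℂ)⁻¹ • Jc)) i j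
        = (n:ℂ)⁻¹ * ((n:ℂ)⁻¹ * (∑ l, ∑ k, Nc k l)) := by
      simp only [Matrix.smul_mul, Matrix.mul_smul, Matrix.smul_apply, smul_eq_mul]
      rw [hJNJ0]
    simp only [Matrix.sub_apply, Matrix.zero_apply] at h
    rw [hJNe, hNJe, hJNJe, hNcsumcol j, hNcsumrow i, hNctot] at h
    have hNije : Nc i j = ((DZ i j:ℤ):ℂ) - (n:ℂ)⁻¹ * (((z i:ℤ):ℂ) * ((z j:ℤ):ℂ)) := by
      simp [hNc]
    rw [hNije] at h
    have hDij : ((DZ i j : ℤ):ℂ) = -((CZ i j:ℤ):ℂ) := by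
      have : DZ i j = -(CZ i j) := by rw [hDC]; rfl
      rw [this]; push_cast; rfl
    rw [hDij] at h
    -- clear denominators
    have h2 : (((n:ℤ)^2 * CZ i j + n * (z i * z j) - n * w j - n * w i + S2 : ℤ) : ℂ) = 0 := by
      push_cast
      field_simp at h
      have h5 : ((n:ℂ)^2) * (((n:ℂ))^2 * ((CZ i j :ℤ):ℂ) + (n:ℂ) * (((z i:ℤ):ℂ) * ((z j:ℤ):ℂ))
          - (n:ℂ) * ((w j:ℤ):ℂ) - (n:ℂ) * ((w i:ℤ):ℂ) + ((S2:ℤ):ℂ)) = 0 := by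
        linear_combination (-(n:ℂ)^2) * h
      rcases mul_eq_zero.mp h5 with hc | hc
      · exact absurd hc (pow_ne_zero 2 hnC)
      · linear_combination hc
    exact_mod_cast h2
  -- diagonal of CZ
  have diagCZ : ∀ i, CZ i i = z i := by
    intro i
    have hLdiag : LZ i i = ∑ j, AZ i j := by
      simp [hLZ, hAZdiag i]
    have hrow : ∑ k, LZ i k * LZ i k
        = (∑ j, AZ i j) * (∑ j, AZ i j) + ∑ j, AZ i j := by
      rw [← Finset.sum_erase_add _ _ (Finset.mem_univ i)]
      have h1 : ∀ k ∈ Finset.univ.erase i, LZ i k * LZ i k = AZ i k := by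
        intro k hk
        have hki : k ≠ i := Finset.ne_of_mem_erase hk
        have hLik : LZ i k = -AZ i k := by
          simp [hLZ, Matrix.diagonal_apply_ne _ (Ne.symm hki)]
        rw [hLik]
        rcases hAZ01 i k with h|h <;> rw [h] <;> ring
      rw [Finset.sum_congr rfl h1, hLdiag,
        Finset.sum_erase _ (hAZdiag i)]
      ring
    have hcol : ∑ k, LZ k i * LZ k i
        = (∑ j, AZ i j) * (∑ j, AZ i j) + ∑ j, AZ j i := by
      rw [← Finset.sum_erase_add _ _ (Finset.mem_univ i)]
      have h1 : ∀ k ∈ Finset.univ.erase i, LZ k i * LZ k i = AZ k i := by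
        intro k hk
        have hki : k ≠ i := Finset.ne_of_mem_erase hk
        have hLki : LZ k i = -AZ k i := by
          simp [hLZ, Matrix.diagonal_apply_ne _ hki]
        rw [hLki]
        rcases hAZ01 k i with h|h <;> rw [h] <;> ring
      rw [Finset.sum_congr rfl h1, hLdiag,
        Finset.sum_erase (f := fun k => AZ k i) _ (hAZdiag i)]
      ring
    have : CZ i i = (∑ k, LZ i k * LZ i k) - (∑ k, LZ k i * LZ k i) := by
      simp [hCZ, Matrix.sub_apply, Matrix.mul_apply, Matrix.transpose_apply]
    rw [this, hrow, hcol, hz]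
    ring
  refine ⟨AZ, hAcast, hAZ01, hAZdiag, hlapcast, ?_⟩
  intro i j
  have Eij := EZ i j
  have Eii := EZ i i
  have Ejj := EZ j j
  rw [diagCZ i] at Eii
  rw [diagCZ j] at Ejj
  have hn0 : ((n:ℤ))^2 ≠ 0 := by positivity
  have key : (n:ℤ)^2 * (2 * (n:ℤ) * CZ i j - ((n:ℤ) * (z i + z j) + (z i - z j)^2)) = 0 := by
    linear_combination (2*(n:ℤ)) * Eij - (n:ℤ) * Eii - (n:ℤ) * Ejj
  have := mul_eq_zero.mp key
  rcases this with h | h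
  · exact absurd h hn0
  · have hfin : 2 * (n:ℤ) * CZ i j = (n:ℤ) * (z i + z j) + (z i - z j)^2 := by linarith
    exact hfin

lemma comm_shift {m : Type*} [Fintype m] [DecidableEq m] (X : Matrix m m ℤ) (c : ℤ) :
    (X + c • 1) * (X + c • 1)ᵀ - (X + c • 1)ᵀ * (X + c • 1) = X * Xᵀ - Xᵀ * X := by
  have hc : ∀ Y : Matrix m m ℤ, Y * (c • 1) = (c • 1) * Y := by
    intro Y
    rw [Matrix.mul_smul, Matrix.smul_mul, Matrix.mul_one, Matrix.one_mul]
  simp only [Matrix.transpose_add, Matrix.transpose_smul, Matrix.transpose_one,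
    Matrix.add_mul, Matrix.mul_add]
  rw [hc Xᵀ, ← hc X]
  abel

lemma isNormalM_lap_of_comm {m : Type*} [Fintype m] [DecidableEq m]
    (B : Matrix m m ℝ) (BZ : Matrix m m ℤ) (hB : ∀ i j, B i j = (BZ i j : ℝ))
    (h : (Matrix.diagonal (fun i => ∑ j, BZ i j) - BZ) * (Matrix.diagonal (fun i => ∑ j, BZ i j) - BZ)ᵀ
       = (Matrix.diagonal (fun i => ∑ j, BZ i j) - BZ)ᵀ * (Matrix.diagonal (fun i => ∑ j, BZ i j) - BZ)) :
    IsNormalM (lap B) := by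
  classical
  set LZ : Matrix m m ℤ := Matrix.diagonal (fun i => ∑ j, BZ i j) - BZ with hLZ
  have hlap : ∀ i j, lap B i j = ((LZ i j : ℤ) : ℝ) := by
    intro i j
    by_cases hij : i = j
    · subst hij
      simp only [lap, hLZ, Matrix.sub_apply, Matrix.diagonal_apply_eq]
      push_cast
      simp [hB]
    · simp only [lap, hLZ, Matrix.sub_apply, Matrix.diagonal_apply_ne _ hij]
      push_cast
      simp [hB]
  have hstar : star (lap B) = (lap B)ᵀ := by
    ext i j
    simp [Matrix.star_eq_conjTranspose, Matrix.conjTranspose_apply]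
  unfold IsNormalM
  rw [hstar]
  ext i j
  simp only [Matrix.mul_apply, Matrix.transpose_apply, hlap]
  have h1 : ∑ k, ((LZ k i :ℤ):ℝ) * ((LZ k j:ℤ):ℝ) = (((LZᵀ * LZ) i j : ℤ):ℝ) := by
    push_cast
    simp [Matrix.mul_apply, Matrix.transpose_apply]
  have h2 : ∑ k, ((LZ i k :ℤ):ℝ) * ((LZ j k:ℤ):ℝ) = (((LZ * LZᵀ) i j : ℤ):ℝ) := by
    push_cast
    simp [Matrix.mul_apply, Matrix.transpose_apply]
  rw [h1, h2, ← h]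


set_option maxHeartbeats 1000000 in
/-- If the order `n` is square-free or twice a square-free number and `Γ`
is restricted-normal, then `Γ` is a directed join of two normal digraphs. -/
theorem restricted_normal_is_directed_join_of_squarefree {n : ℕ}
    (A : Matrix (Fin n) (Fin n) ℝ) (hA : IsAdj A)
    (hn : Squarefree n ∨ ∃ m, n = 2 * m ∧ Squarefree m)
    (Q : Matrix (Fin n) (Fin (n - 1)) ℂ) (hQ : IsRestrictor Q)
    (hrn : IsNormalM (Qᴴ * lapC A * Q)) (hnn : ¬ IsNormalM (lap A)) :
    ∃ S : Finset (Fin n), S.Nonempty ∧ S ≠ Finset.univ ∧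
      (∀ i ∈ S, ∀ j ∉ S, A i j = 1 ∧ A j i = 0) ∧
      IsNormalM (lap (A.submatrix (fun x : {i // i ∈ S} => (x : Fin n))
        (fun x : {i // i ∈ S} => (x : Fin n)))) ∧
      IsNormalM (lap (A.submatrix (fun x : {i // i ∉ S} => (x : Fin n))
        (fun x : {i // i ∉ S} => (x : Fin n)))) := by
  classical
  have hn2 : 2 ≤ n := by
    by_contra h
    push_neg at h
    interval_cases n
    · rcases hn with h1 | ⟨m, hm, h1⟩
      · exact not_squarefree_zero h1
      · have : m = 0 := by omega
        subst this
        exact not_squarefree_zero h1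
    · apply hnn
      have h0 : lap A = 0 := by
        ext i j
        have hij : i = j := Subsingleton.elim i j
        subst hij
        have hi0 : i = 0 := Subsingleton.elim i 0
        subst hi0
        simp [lap, hA.2 0, Fin.sum_univ_one]
      unfold IsNormalM
      rw [h0]
      simp
  have hnzZ : (0:ℤ) < (n:ℤ) := by exact_mod_cast (by omega : 0 < n)
  obtain ⟨AZ, hAcast, hAZ01, hAZdiag, hlapcast, hF⟩ := core hn2 A hA Q hQ hrn
  set LZ : Matrix (Fin n) (Fin n) ℤ := Matrix.diagonal (fun i => ∑ j, AZ i j) - AZ with hLZ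
  set CZ : Matrix (Fin n) (Fin n) ℤ := LZ * LZᵀ - LZᵀ * LZ with hCZ
  set z : Fin n → ℤ := fun i => ∑ k, AZ i k - ∑ k, AZ k i with hz
  have hF' : ∀ i j, 2*(n:ℤ)*CZ i j = n*(z i + z j) + (z i - z j)^2 := fun i j => hF i j
  -- bounds on z
  have hAZle : ∀ i j, 0 ≤ AZ i j ∧ AZ i j ≤ 1 := by
    intro i j
    rcases hAZ01 i j with h|h <;> simp [h]
  have hcard_erase : ∀ i : Fin n, ((Finset.univ.erase i).card : ℤ) = (n:ℤ) - 1 := by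
    intro i
    rw [Finset.card_erase_of_mem (Finset.mem_univ i)]
    rw [Finset.card_univ, Fintype.card_fin]
    push_cast [Nat.cast_sub (by omega : 1 ≤ n)]
    ring
  have hdoutle : ∀ i, ∑ k, AZ i k ≤ (n:ℤ) - 1 := by
    intro i
    calc ∑ k, AZ i k = ∑ k ∈ Finset.univ.erase i, AZ i k :=
          (Finset.sum_erase _ (hAZdiag i)).symm
    _ ≤ ∑ k ∈ Finset.univ.erase i, 1 := Finset.sum_le_sum (fun k _ => (hAZle i k).2)
    _ = (n:ℤ) - 1 := by rw [Finset.sum_const, nsmul_eq_mul, mul_one, hcard_erase]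
  have hdinle : ∀ i, ∑ k, AZ k i ≤ (n:ℤ) - 1 := by
    intro i
    calc ∑ k, AZ k i = ∑ k ∈ Finset.univ.erase i, AZ k i :=
          (Finset.sum_erase (f := fun k => AZ k i) _ (hAZdiag i)).symm
    _ ≤ ∑ k ∈ Finset.univ.erase i, 1 := Finset.sum_le_sum (fun k _ => (hAZle k i).2)
    _ = (n:ℤ) - 1 := by rw [Finset.sum_const, nsmul_eq_mul, mul_one, hcard_erase]
  have hdout0 : ∀ i, 0 ≤ ∑ k, AZ i k := fun i => Finset.sum_nonneg (fun k _ => (hAZle i k).1)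
  have hdin0 : ∀ i, 0 ≤ ∑ k, AZ k i := fun i => Finset.sum_nonneg (fun k _ => (hAZle k i).1)
  have hzb : ∀ i, |z i| ≤ (n:ℤ) - 1 := by
    intro i
    rw [abs_le]
    constructor
    · have := hdinle i; have := hdout0 i; simp only [hz]; omega
    · have := hdoutle i; have := hdin0 i; simp only [hz]; omega
  have hzb' : ∀ i, -(n:ℤ)+1 ≤ z i ∧ z i ≤ (n:ℤ)-1 := by
    intro i
    have := abs_le.mp (hzb i)
    omega
  have hdij : ∀ i j, z i - z j = 0 ∨ z i - z j = n ∨ z i - z j = -n :=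
    fun i j => nt_lemma hn2 hn _ _ _ (hF' i j) (hzb i) (hzb j)
  have sumz : ∑ i, z i = 0 := by
    have h1 : ∑ i, ∑ k, AZ i k = ∑ i, ∑ k, AZ k i := Finset.sum_comm
    simp only [hz, Finset.sum_sub_distrib, h1, sub_self]
  by_cases hall : ∀ i j, z i = z j
  · exfalso
    apply hnn
    have hz0 : ∀ i, z i = 0 := by
      intro i
      have h1 : ∑ j, z j = (((Finset.univ : Finset (Fin n))).card : ℤ) * z i := by
        rw [Finset.sum_congr rfl (fun j _ => hall j i), Finset.sum_const, nsmul_eq_mul]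
      rw [sumz, Finset.card_univ, Fintype.card_fin] at h1
      have : (n:ℤ) * z i = 0 := h1.symm
      rcases mul_eq_zero.mp this with h|h
      · omega
      · exact h
    have hCZ0 : LZ * LZᵀ = LZᵀ * LZ := by
      have h0 : CZ = 0 := by
        ext i j
        have h := hF' i j
        rw [hz0 i, hz0 j] at h
        simp only [Matrix.zero_apply]
        have h2 : 2*(n:ℤ)* CZ i j = 0 := by linarith
        rcases mul_eq_zero.mp h2 with h3|h3
        · exfalso; omega
        · exact h3
      have := sub_eq_zero.mp (hCZ ▸ h0)
      exact this
    exact isNormalM_lap_of_comm A AZ hAcast hCZ0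
  · push_neg at hall
    obtain ⟨i0, j0, hne⟩ := hall
    set S : Finset (Fin n) := Finset.univ.filter (fun i => 0 < z i) with hS
    have hmemS : ∀ i, i ∈ S ↔ 0 < z i := by
      intro i; simp [hS]
    have cross : ∀ i ∈ S, ∀ j ∉ S, z i - z j = n := by
      intro i hi j hj
      rw [hmemS] at hi hj
      rcases hdij i j with h|h|h <;> omega
    have sameS : ∀ i ∈ S, ∀ j ∈ S, z i = z j := by
      intro i hi j hj
      rw [hmemS] at hi hj
      have h1 := hzb' i
      have h2 := hzb' j
      rcases hdij i j with h|h|h <;> omega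
    have sameNS : ∀ i, i ∉ S → ∀ j, j ∉ S → z i = z j := by
      intro i hi j hj
      rw [hmemS] at hi hj
      have h1 := hzb' i
      have h2 := hzb' j
      rcases hdij i j with h|h|h <;> omega
    have hex : ∃ a, a ∈ S ∧ ∃ b, b ∉ S := by
      have h1 := hzb' i0
      have h2 := hzb' j0
      rcases hdij i0 j0 with h|h|h
      · exact absurd (by omega : z i0 = z j0) hne
      · exact ⟨i0, (hmemS i0).mpr (by omega), j0, fun hc => by
          rw [hmemS] at hc; omega⟩
      · exact ⟨j0, (hmemS j0).mpr (by omega), i0, fun hc => by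
          rw [hmemS] at hc; omega⟩
    obtain ⟨a0, ha0, b0, hb0⟩ := hex
    have hSne : S.Nonempty := ⟨a0, ha0⟩
    have hSnu : S ≠ Finset.univ := fun h => hb0 (h ▸ Finset.mem_univ b0)
    set s : ℕ := S.card with hs
    have hsle : s ≤ n := by
      have := Finset.card_le_univ S
      rwa [Fintype.card_fin] at this
    have hcardcompl : ((Sᶜ : Finset (Fin n)).card : ℤ) = (n:ℤ) - s := by
      rw [Finset.card_compl, Fintype.card_fin]
      rw [← hs]
      push_cast [Nat.cast_sub hsle]
      ring
    have hvs : z a0 = (n:ℤ) - s := by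
      have h1 : ∑ i ∈ S, z i = (s:ℤ) * z a0 := by
        rw [Finset.sum_congr rfl (fun i hi => sameS i hi a0 ha0), Finset.sum_const,
          nsmul_eq_mul, hs]
      have h2 : ∑ i ∈ Sᶜ, z i = ((n:ℤ) - s) * (z a0 - n) := by
        have : ∀ i ∈ Sᶜ, z i = z a0 - n := by
          intro i hi
          have := cross a0 ha0 i (Finset.mem_compl.mp hi)
          omega
        rw [Finset.sum_congr rfl this, Finset.sum_const, nsmul_eq_mul, hcardcompl]
      have h3 : ∑ i ∈ S, z i + ∑ i ∈ Sᶜ, z i = 0 := by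
        rw [Finset.sum_add_sum_compl, sumz]
      rw [h1, h2] at h3
      have h4 : (n:ℤ) * z a0 = (n:ℤ) * ((n:ℤ) - s) := by ring_nf; ring_nf at h3; linarith
      exact mul_left_cancel₀ (by omega) h4
    have hzS : ∀ i ∈ S, z i = (n:ℤ) - s := by
      intro i hi
      rw [sameS i hi a0 ha0, hvs]
    have hzNS : ∀ i, i ∉ S → z i = -(s:ℤ) := by
      intro i hi
      have := cross a0 ha0 i hi
      rw [hvs] at this
      omega
    -- the directed join structure
    have key : ∀ i ∈ S, ∀ j ∉ S, AZ i j = 1 ∧ AZ j i = 0 := by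
      have hsum1 : ∑ i ∈ S, z i = (s:ℤ) * ((n:ℤ) - s) := by
        rw [Finset.sum_congr rfl hzS, Finset.sum_const, nsmul_eq_mul, hs]
      have hsplit : ∀ i, z i = ∑ k ∈ S, (AZ i k - AZ k i) + ∑ k ∈ Sᶜ, (AZ i k - AZ k i) := by
        intro i
        rw [Finset.sum_add_sum_compl]
        simp only [hz, Finset.sum_sub_distrib]
      have hinner0 : ∑ i ∈ S, ∑ k ∈ S, (AZ i k - AZ k i) = 0 := by
        simp only [Finset.sum_sub_distrib]
        rw [Finset.sum_comm (f := fun i k => AZ k i)]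
        exact sub_self _
      have hTot : ∑ i ∈ S, ∑ k ∈ Sᶜ, (AZ i k - AZ k i) = (s:ℤ)*((n:ℤ)-s) := by
        have := Finset.sum_congr rfl (fun i (hi : i ∈ S) => hsplit i)
        rw [Finset.sum_add_distrib, hinner0, zero_add] at this
        rw [← this, hsum1]
      have hone : ∑ i ∈ S, ∑ k ∈ Sᶜ, (1:ℤ) = (s:ℤ)*((n:ℤ)-s) := by
        simp only [Finset.sum_const, nsmul_eq_mul, mul_one, hcardcompl]
        rw [← hs]
      have hzero : ∑ i ∈ S, ∑ k ∈ Sᶜ, ((1:ℤ) - (AZ i k - AZ k i)) = 0 := by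
        have h5 : ∀ i ∈ S, ∑ k ∈ Sᶜ, ((1:ℤ) - (AZ i k - AZ k i))
            = ∑ k ∈ Sᶜ, (1:ℤ) - ∑ k ∈ Sᶜ, (AZ i k - AZ k i) :=
          fun i _ => Finset.sum_sub_distrib _ _
        rw [Finset.sum_congr rfl h5, Finset.sum_sub_distrib, hone, hTot, sub_self]
      have hterm : ∀ i ∈ S, ∀ k ∈ Sᶜ, (0:ℤ) ≤ 1 - (AZ i k - AZ k i) := by
        intro i _ k _
        have h1 := hAZle i k
        have h2 := hAZle k i
        omega
      have houter := (Finset.sum_eq_zero_iff_of_nonneg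
        (fun i hi => Finset.sum_nonneg (fun k hk => hterm i hi k hk))).mp hzero
      intro i hi j hj
      have hj' : j ∈ Sᶜ := Finset.mem_compl.mpr hj
      have hin := (Finset.sum_eq_zero_iff_of_nonneg
        (fun k hk => hterm i hi k hk)).mp (houter i hi)
      have := hin j hj'
      have h1 := hAZ01 i j
      have h2 := hAZ01 j i
      constructor <;> omega
    -- final
    refine ⟨S, hSne, hSnu, ?_, ?_, ?_⟩
    · intro i hi j hj
      obtain ⟨h1, h2⟩ := key i hi j hj
      constructor
      · rw [hAcast, h1]; norm_num
      · rw [hAcast, h2]; norm_num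
    · -- S part normal
      apply isNormalM_lap_of_comm _ (AZ.submatrix (fun x : {i // i ∈ S} => (x : Fin n))
        (fun x : {i // i ∈ S} => (x : Fin n)))
      · intro i j
        simp only [Matrix.submatrix_apply, hAcast]
      · set AZ1 : Matrix {i // i ∈ S} {i // i ∈ S} ℤ :=
          AZ.submatrix (fun x : {i // i ∈ S} => (x : Fin n))
            (fun x : {i // i ∈ S} => (x : Fin n)) with hAZ1
        set L1 : Matrix {i // i ∈ S} {i // i ∈ S} ℤ :=
          Matrix.diagonal (fun a => ∑ b, AZ1 a b) - AZ1 with hL1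
        set B : Matrix {i // i ∈ S} {i // i ∈ S} ℤ :=
          Matrix.of (fun a b => LZ (a:Fin n) (b:Fin n)) with hB
        have hBL : B = L1 + ((n:ℤ) - s) • 1 := by
          ext a b
          by_cases hab : a = b
          · subst hab
            simp only [hB, Matrix.of_apply, hL1, Matrix.add_apply, Matrix.sub_apply,
              Matrix.diagonal_apply_eq, Matrix.smul_apply, Matrix.one_apply_eq,
              smul_eq_mul, mul_one]
            have hLaa : LZ (a:Fin n) (a:Fin n) = ∑ k, AZ (a:Fin n) k := by
              simp [hLZ, Matrix.sub_apply, Matrix.diagonal_apply_eq, hAZdiag]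
            have hA1aa : AZ1 a a = 0 := hAZdiag (a:Fin n)
            have h1 : ∑ b : {i // i ∈ S}, AZ1 a b = ∑ k ∈ S, AZ (a:Fin n) k :=
              Finset.sum_coe_sort S (fun k => AZ (a:Fin n) k)
            have h2 : ∑ k ∈ Sᶜ, AZ (a:Fin n) k = (n:ℤ) - s := by
              rw [Finset.sum_congr rfl
                (fun k hk => (key (a:Fin n) a.2 k (Finset.mem_compl.mp hk)).1),
                Finset.sum_const, nsmul_eq_mul, mul_one, hcardcompl]
            rw [hLaa, hA1aa, h1, ← Finset.sum_add_sum_compl S (fun k => AZ (a:Fin n) k), h2]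
            ring
          · have hab' : (a:Fin n) ≠ (b:Fin n) := fun h => hab (Subtype.ext h)
            simp only [hB, Matrix.of_apply, hL1, Matrix.add_apply, Matrix.sub_apply,
              Matrix.diagonal_apply_ne _ hab, Matrix.smul_apply,
              Matrix.one_apply_ne hab, smul_eq_mul, mul_zero, hLZ,
              Matrix.diagonal_apply_ne _ hab']
            simp [hAZ1, Matrix.submatrix_apply]
        have hB0 : B * Bᵀ - Bᵀ * B = 0 := by
          ext a b
          have hcz : CZ (a:Fin n) (b:Fin n) = (n:ℤ) - s := by
            have h := hF' (a:Fin n) (b:Fin n)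
            rw [hzS (a:Fin n) a.2, hzS (b:Fin n) b.2] at h
            have h3 : 2*(n:ℤ)*CZ (a:Fin n) (b:Fin n) = 2*(n:ℤ)*((n:ℤ)-(s:ℤ)) := by
              ring_nf at h ⊢
              linarith
            exact mul_left_cancel₀ (by omega) h3
          have hexp : CZ (a:Fin n) (b:Fin n)
              = ∑ k ∈ S, (LZ (a:Fin n) k * LZ (b:Fin n) k - LZ k (a:Fin n) * LZ k (b:Fin n))
              + ∑ k ∈ Sᶜ, (LZ (a:Fin n) k * LZ (b:Fin n) k - LZ k (a:Fin n) * LZ k (b:Fin n)) := by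
            rw [Finset.sum_add_sum_compl]
            simp only [hCZ, Matrix.sub_apply, Matrix.mul_apply, Matrix.transpose_apply,
              ← Finset.sum_sub_distrib]
          have hcompl : ∑ k ∈ Sᶜ, (LZ (a:Fin n) k * LZ (b:Fin n) k
              - LZ k (a:Fin n) * LZ k (b:Fin n)) = (n:ℤ) - s := by
            have hterm : ∀ k ∈ Sᶜ, LZ (a:Fin n) k * LZ (b:Fin n) k
                - LZ k (a:Fin n) * LZ k (b:Fin n) = 1 := by
              intro k hk
              have hkS := Finset.mem_compl.mp hk
              have hak : (a:Fin n) ≠ k := fun h => hkS (h ▸ a.2)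
              have hbk : (b:Fin n) ≠ k := fun h => hkS (h ▸ b.2)
              have e1 : LZ (a:Fin n) k = -1 := by
                simp [hLZ, Matrix.sub_apply, Matrix.diagonal_apply_ne _ hak,
                  (key (a:Fin n) a.2 k hkS).1]
              have e2 : LZ (b:Fin n) k = -1 := by
                simp [hLZ, Matrix.sub_apply, Matrix.diagonal_apply_ne _ hbk,
                  (key (b:Fin n) b.2 k hkS).1]
              have e3 : LZ k (a:Fin n) = 0 := by
                simp [hLZ, Matrix.sub_apply, Matrix.diagonal_apply_ne _ (Ne.symm hak),
                  (key (a:Fin n) a.2 k hkS).2]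
              have e4 : LZ k (b:Fin n) = 0 := by
                simp [hLZ, Matrix.sub_apply, Matrix.diagonal_apply_ne _ (Ne.symm hbk),
                  (key (b:Fin n) b.2 k hkS).2]
              rw [e1, e2, e3, e4]
              ring
            rw [Finset.sum_congr rfl hterm, Finset.sum_const, nsmul_eq_mul, mul_one,
              hcardcompl]
          have hsub : (B * Bᵀ - Bᵀ * B) a b
              = ∑ k ∈ S, (LZ (a:Fin n) k * LZ (b:Fin n) k
                - LZ k (a:Fin n) * LZ k (b:Fin n)) := by
            simp only [Matrix.sub_apply, Matrix.mul_apply, Matrix.transpose_apply, hB,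
              Matrix.of_apply, ← Finset.sum_sub_distrib]
            exact Finset.sum_coe_sort S
              (fun k => LZ (a:Fin n) k * LZ (b:Fin n) k - LZ k (a:Fin n) * LZ k (b:Fin n))
          rw [Matrix.zero_apply, hsub]
          linarith [hcz, hexp, hcompl]
        have hfin : L1 * L1ᵀ - L1ᵀ * L1 = 0 := by
          rw [← comm_shift L1 ((n:ℤ)-s), ← hBL]
          exact hB0
        exact sub_eq_zero.mp hfin
    · -- complement part normal
      apply isNormalM_lap_of_comm _ (AZ.submatrix (fun x : {i // i ∉ S} => (x : Fin n))
        (fun x : {i // i ∉ S} => (x : Fin n)))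
      · intro i j
        simp only [Matrix.submatrix_apply, hAcast]
      · set AZ2 : Matrix {i // i ∉ S} {i // i ∉ S} ℤ :=
          AZ.submatrix (fun x : {i // i ∉ S} => (x : Fin n))
            (fun x : {i // i ∉ S} => (x : Fin n)) with hAZ2
        set L2 : Matrix {i // i ∉ S} {i // i ∉ S} ℤ :=
          Matrix.diagonal (fun a => ∑ b, AZ2 a b) - AZ2 with hL2
        set B2 : Matrix {i // i ∉ S} {i // i ∉ S} ℤ :=
          Matrix.of (fun a b => LZ (a:Fin n) (b:Fin n)) with hB2
        have hsubt : ∀ g : Fin n → ℤ, ∑ k ∈ Sᶜ, g k = ∑ k : {i // i ∉ S}, g (k : Fin n) :=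
          fun g => Finset.sum_subtype Sᶜ (fun x => Finset.mem_compl) g
        have hBL : B2 = L2 := by
          ext a b
          by_cases hab : a = b
          · subst hab
            simp only [hB2, Matrix.of_apply, hL2, Matrix.sub_apply,
              Matrix.diagonal_apply_eq]
            have hLaa : LZ (a:Fin n) (a:Fin n) = ∑ k, AZ (a:Fin n) k := by
              simp [hLZ, Matrix.sub_apply, Matrix.diagonal_apply_eq, hAZdiag]
            have hA2aa : AZ2 a a = 0 := hAZdiag (a:Fin n)
            have h1 : ∑ b : {i // i ∉ S}, AZ2 a b = ∑ k ∈ Sᶜ, AZ (a:Fin n) k :=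
              (hsubt (fun k => AZ (a:Fin n) k)).symm
            have h2 : ∑ k ∈ S, AZ (a:Fin n) k = 0 := by
              rw [Finset.sum_congr rfl (fun k hk => (key k hk (a:Fin n) a.2).2),
                Finset.sum_const, smul_zero]
            rw [hLaa, hA2aa, h1, ← Finset.sum_add_sum_compl S (fun k => AZ (a:Fin n) k), h2]
            ring
          · have hab' : (a:Fin n) ≠ (b:Fin n) := fun h => hab (Subtype.ext h)
            simp only [hB2, Matrix.of_apply, hL2, Matrix.sub_apply,
              Matrix.diagonal_apply_ne _ hab, hLZ, Matrix.diagonal_apply_ne _ hab']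
            simp [hAZ2, Matrix.submatrix_apply]
        have hB0 : B2 * B2ᵀ - B2ᵀ * B2 = 0 := by
          ext a b
          have hcz : CZ (a:Fin n) (b:Fin n) = -(s:ℤ) := by
            have h := hF' (a:Fin n) (b:Fin n)
            rw [hzNS (a:Fin n) a.2, hzNS (b:Fin n) b.2] at h
            have h3 : 2*(n:ℤ)*CZ (a:Fin n) (b:Fin n) = 2*(n:ℤ)*(-(s:ℤ)) := by
              ring_nf at h ⊢
              linarith
            exact mul_left_cancel₀ (by omega) h3
          have hexp : CZ (a:Fin n) (b:Fin n)
              = ∑ k ∈ S, (LZ (a:Fin n) k * LZ (b:Fin n) k - LZ k (a:Fin n) * LZ k (b:Fin n))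
              + ∑ k ∈ Sᶜ, (LZ (a:Fin n) k * LZ (b:Fin n) k - LZ k (a:Fin n) * LZ k (b:Fin n)) := by
            rw [Finset.sum_add_sum_compl]
            simp only [hCZ, Matrix.sub_apply, Matrix.mul_apply, Matrix.transpose_apply,
              ← Finset.sum_sub_distrib]
          have hcompl : ∑ k ∈ S, (LZ (a:Fin n) k * LZ (b:Fin n) k
              - LZ k (a:Fin n) * LZ k (b:Fin n)) = -(s:ℤ) := by
            have hterm : ∀ k ∈ S, LZ (a:Fin n) k * LZ (b:Fin n) k
                - LZ k (a:Fin n) * LZ k (b:Fin n) = -1 := by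
              intro k hk
              have hak : (a:Fin n) ≠ k := fun h => a.2 (h ▸ hk)
              have hbk : (b:Fin n) ≠ k := fun h => b.2 (h ▸ hk)
              have e1 : LZ (a:Fin n) k = 0 := by
                simp [hLZ, Matrix.sub_apply, Matrix.diagonal_apply_ne _ hak,
                  (key k hk (a:Fin n) a.2).2]
              have e2 : LZ (b:Fin n) k = 0 := by
                simp [hLZ, Matrix.sub_apply, Matrix.diagonal_apply_ne _ hbk,
                  (key k hk (b:Fin n) b.2).2]
              have e3 : LZ k (a:Fin n) = -1 := by
                simp [hLZ, Matrix.sub_apply, Matrix.diagonal_apply_ne _ (Ne.symm hak),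
                  (key k hk (a:Fin n) a.2).1]
              have e4 : LZ k (b:Fin n) = -1 := by
                simp [hLZ, Matrix.sub_apply, Matrix.diagonal_apply_ne _ (Ne.symm hbk),
                  (key k hk (b:Fin n) b.2).1]
              rw [e1, e2, e3, e4]
              ring
            rw [Finset.sum_congr rfl hterm, Finset.sum_const, nsmul_eq_mul, mul_neg_one, hs]
          have hsub : (B2 * B2ᵀ - B2ᵀ * B2) a b
              = ∑ k ∈ Sᶜ, (LZ (a:Fin n) k * LZ (b:Fin n) k
                - LZ k (a:Fin n) * LZ k (b:Fin n)) := by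
            simp only [Matrix.sub_apply, Matrix.mul_apply, Matrix.transpose_apply, hB2,
              Matrix.of_apply, ← Finset.sum_sub_distrib]
            exact (hsubt (fun k => LZ (a:Fin n) k * LZ (b:Fin n) k
              - LZ k (a:Fin n) * LZ k (b:Fin n))).symm
          rw [Matrix.zero_apply, hsub]
          linarith [hcz, hexp, hcompl]
        have hfin : L2 * L2ᵀ - L2ᵀ * L2 = 0 := by
          rw [← hBL]
          exact hB0
        exact sub_eq_zero.mp hfin
end
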